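/- arXiv:2512.09084 — 2 statements merged into one kernel-verified Lean document; each statement's English description precedes it below -/
import Mathlib

section
/- For any continuous function f: [0,1]^n → ℝ, there exist continuous univariate functions Φ_q : ℝ → ℝ (for q = 0,...,2n) and continuous univariate functions φ_{q,p} : [0,1] → ℝ (for q = 0,...,2n and p = 1,...,n) such that f(x_1,...,x_n) = Σ_{q=0}^{2n} Φ_q( Σ_{p=1}^{n} φ_{q,p}(x_p) ) for all (x_1,...,x_n) ∈ [0,1]^n. -/
namespace KA




noncomputable def Elo (n : ℕ) (δ : ℝ) (q j : ℤ) : ℝ := ((j*(2*n+1) + q + 1 : ℤ) : ℝ)*δ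
noncomputable def Ehi (n : ℕ) (δ : ℝ) (q j : ℤ) : ℝ := ((j*(2*n+1) + q + (2*n+1) : ℤ) : ℝ)*δ
noncomputable def EE (n : ℕ) (δ : ℝ) (q j : ℤ) : Set ℝ := Set.Icc (Elo n δ q j) (Ehi n δ q j)

lemma Elo_mono {n : ℕ} {δ : ℝ} (hδ : 0 ≤ δ) {q : ℤ} : Monotone (Elo n δ q) := by
  intro j j' h
  unfold Elo
  have h1 : (j*(2*n+1) + q + 1 : ℤ) ≤ (j'*(2*n+1) + q + 1 : ℤ) := by
    have : (0:ℤ) < 2*n+1 := by positivity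
    nlinarith
  have h2 : ((j*(2*n+1) + q + 1 : ℤ) : ℝ) ≤ ((j'*(2*n+1) + q + 1 : ℤ) : ℝ) := by
    exact_mod_cast h1
  nlinarith

lemma Ehi_eq_Elo_sub {n : ℕ} {δ : ℝ} {q j : ℤ} : Ehi n δ q j = Elo n δ q (j+1) - δ := by
  unfold Ehi Elo; push_cast; ring

lemma Elo_lt_Ehi {n : ℕ} {δ : ℝ} (hδ : 0 < δ) {q j : ℤ} : Elo n δ q j ≤ Ehi n δ q j := by
  unfold Ehi Elo
  have h1 : (j*(2*n+1) + q + 1 : ℤ) ≤ (j*(2*n+1) + q + (2*n+1) : ℤ) := by omega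
  have h2 : ((j*(2*n+1) + q + 1 : ℤ) : ℝ) ≤ ((j*(2*n+1) + q + (2*n+1) : ℤ) : ℝ) := by
    exact_mod_cast h1
  nlinarith

/-- ramp: 0 on `(-∞, Ehi j]`, 1 on `[Ehi j + δ, ∞)`, linear in between. -/
noncomputable def ramp (n : ℕ) (δ : ℝ) (q j : ℤ) (x : ℝ) : ℝ :=
  max 0 (min 1 ((x - Ehi n δ q j)/δ))

lemma ramp_continuous {n δ q j} : Continuous (ramp n δ q j) := by
  apply Continuous.max continuous_const
  apply Continuous.min continuous_const
  exact (continuous_id.sub continuous_const).div_const _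

lemma ramp_mem {n δ q j} (x : ℝ) : ramp n δ q j x ∈ Set.Icc (0:ℝ) 1 := by
  unfold ramp
  constructor
  · exact le_max_left _ _
  · apply max_le (by norm_num)
    exact min_le_left _ _

lemma ramp_eq_zero {n δ q j} (hδ : 0 < δ) {x : ℝ} (h : x ≤ Ehi n δ q j) :
    ramp n δ q j x = 0 := by
  unfold ramp
  have : (x - Ehi n δ q j)/δ ≤ 0 := div_nonpos_of_nonpos_of_nonneg (by linarith) hδ.le
  have := min_le_right (1:ℝ) ((x - Ehi n δ q j)/δ)
  exact max_eq_left (by linarith)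

lemma ramp_eq_one {n δ q j} (hδ : 0 < δ) {x : ℝ} (h : Elo n δ q (j+1) ≤ x) :
    ramp n δ q j x = 1 := by
  unfold ramp
  have hx : Ehi n δ q j + δ ≤ x := by rw [Ehi_eq_Elo_sub]; linarith
  have : (1:ℝ) ≤ (x - Ehi n δ q j)/δ := by
    rw [le_div_iff₀ hδ]; linarith
  rw [min_eq_left this]
  exact max_eq_right (by norm_num)

/-- The piecewise interpolation function. -/
noncomputable def pieceF (n : ℕ) (δ : ℝ) (q : ℤ) (c : ℤ → ℝ) (jmin jmax : ℤ) (x : ℝ) : ℝ :=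
  c jmin + ∑ j ∈ Finset.Ico jmin (jmax+1), (c (j+1) - c j) * ramp n δ q j x

lemma pieceF_continuous {n δ q c jmin jmax} : Continuous (pieceF n δ q c jmin jmax) := by
  apply Continuous.add continuous_const
  apply continuous_finset_sum
  intro j _
  exact continuous_const.mul ramp_continuous

lemma sum_Ico_succ_top_int (f : ℤ → ℝ) {a b : ℤ} (h : a ≤ b) :
    ∑ j ∈ Finset.Ico a (b+1), f j = (∑ j ∈ Finset.Ico a b, f j) + f b := by
  have hins : Finset.Ico a (b+1) = insert b (Finset.Ico a b) := by
    ext j; simp only [Finset.mem_Ico, Finset.mem_insert]; omega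
  rw [hins, Finset.sum_insert (by simp [Finset.mem_Ico])]
  ring

lemma telescope (f : ℤ → ℝ) (a b : ℤ) (h : a ≤ b) :
    ∑ j ∈ Finset.Ico a b, (f (j+1) - f j) = f b - f a := by
  have key : ∀ m : ℕ, ∑ j ∈ Finset.Ico a (a + (m:ℤ)), (f (j+1) - f j) = f (a+(m:ℤ)) - f a := by
    intro m
    induction m with
    | zero => simp
    | succ m ih =>
        rw [show a + ((m+1:ℕ):ℤ) = (a + (m:ℤ)) + 1 by push_cast; ring,
          sum_Ico_succ_top_int _ (by omega), ih]
        ring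
  have hb : b = a + ((b - a).toNat : ℤ) := by omega
  rw [hb]; exact key _

/-- Main evaluation lemma: on `[Elo j₀, Elo (j₀+1)]` the function is a convex
combination of `c j₀` and `c (j₀+1)`. -/
lemma pieceF_eval {n : ℕ} {δ : ℝ} (hδ : 0 < δ) {q : ℤ} (c : ℤ → ℝ) {jmin jmax j₀ : ℤ}
    (h1 : jmin ≤ j₀) (h2 : j₀ ≤ jmax) {x : ℝ}
    (hx1 : Elo n δ q j₀ ≤ x) (hx2 : x ≤ Elo n δ q (j₀+1)) :
    pieceF n δ q c jmin jmax x = c j₀ + (c (j₀+1) - c j₀) * ramp n δ q j₀ x := by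
  unfold pieceF
  have split1 : ∑ j ∈ Finset.Ico jmin (jmax+1), (c (j+1) - c j) * ramp n δ q j x
      = ∑ j ∈ Finset.Ico jmin j₀, (c (j+1) - c j) * ramp n δ q j x
      + ∑ j ∈ Finset.Ico j₀ (j₀+1), (c (j+1) - c j) * ramp n δ q j x
      + ∑ j ∈ Finset.Ico (j₀+1) (jmax+1), (c (j+1) - c j) * ramp n δ q j x := by
    rw [← Finset.sum_union (Finset.Ico_disjoint_Ico_consecutive jmin j₀ (j₀+1)),
      Finset.Ico_union_Ico_eq_Ico h1 (by omega),
      ← Finset.sum_union (Finset.Ico_disjoint_Ico_consecutive jmin (j₀+1) (jmax+1)),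
      Finset.Ico_union_Ico_eq_Ico (by omega) (by omega)]
  rw [split1]
  have e1 : ∑ j ∈ Finset.Ico jmin j₀, (c (j+1) - c j) * ramp n δ q j x
      = ∑ j ∈ Finset.Ico jmin j₀, (c (j+1) - c j) := by
    apply Finset.sum_congr rfl
    intro j hj
    rw [Finset.mem_Ico] at hj
    rw [ramp_eq_one hδ (le_trans (Elo_mono hδ.le (by omega)) hx1)]
    ring
  have e2 : ∑ j ∈ Finset.Ico (j₀+1) (jmax+1), (c (j+1) - c j) * ramp n δ q j x = 0 := by
    apply Finset.sum_eq_zero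
    intro j hj
    rw [Finset.mem_Ico] at hj
    have : x ≤ Ehi n δ q j := by
      calc x ≤ Elo n δ q (j₀+1) := hx2
      _ ≤ Elo n δ q j := Elo_mono hδ.le (by omega)
      _ ≤ Ehi n δ q j := Elo_lt_Ehi hδ
    rw [ramp_eq_zero hδ this]
    ring
  have e3 : ∑ j ∈ Finset.Ico j₀ (j₀+1), (c (j+1) - c j) * ramp n δ q j x
      = (c (j₀+1) - c j₀) * ramp n δ q j₀ x := by
    rw [sum_Ico_succ_top_int _ (le_refl j₀)]
    simp
  rw [e1, e2, e3, telescope c jmin j₀ h1]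
  ring

lemma Elo_mono_strict_wait : True := trivial

/-- On the interval `EE j₀` itself, `pieceF` is constant `= c j₀`. -/
lemma pieceF_const {n : ℕ} {δ : ℝ} (hδ : 0 < δ) {q : ℤ} (c : ℤ → ℝ) {jmin jmax j₀ : ℤ}
    (h1 : jmin ≤ j₀) (h2 : j₀ ≤ jmax) {x : ℝ} (hx : x ∈ EE n δ q j₀) :
    pieceF n δ q c jmin jmax x = c j₀ := by
  obtain ⟨hx1, hx2⟩ := hx
  rw [pieceF_eval hδ c h1 h2 hx1 (by rw [Ehi_eq_Elo_sub] at hx2; linarith),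
    ramp_eq_zero hδ hx2]
  ring

/-- Convex-combination estimate. -/
lemma pieceF_close {n : ℕ} {δ : ℝ} (hδ : 0 < δ) {q : ℤ} (c : ℤ → ℝ) {jmin jmax j₀ : ℤ}
    (h1 : jmin ≤ j₀) (h2 : j₀ ≤ jmax) {x : ℝ}
    (hx1 : Elo n δ q j₀ ≤ x) (hx2 : x ≤ Elo n δ q (j₀+1)) {v a : ℝ}
    (ha : |c j₀ - v| ≤ a) (hb : |c (j₀+1) - v| ≤ a) :
    |pieceF n δ q c jmin jmax x - v| ≤ a := by
  rw [pieceF_eval hδ c h1 h2 hx1 hx2]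
  obtain ⟨hr0, hr1⟩ := ramp_mem (n := n) (δ := δ) (q := q) (j := j₀) x
  set θ := ramp n δ q j₀ x
  have hre : c j₀ + (c (j₀+1) - c j₀) * θ - v = (1-θ)*(c j₀ - v) + θ*(c (j₀+1) - v) := by ring
  rw [hre]
  calc |(1-θ)*(c j₀ - v) + θ*(c (j₀+1) - v)|
      ≤ |(1-θ)*(c j₀ - v)| + |θ*(c (j₀+1) - v)| := abs_add_le _ _
    _ = (1-θ)*|c j₀ - v| + θ*|c (j₀+1) - v| := by
        rw [abs_mul, abs_mul, abs_of_nonneg (by linarith : (0:ℝ) ≤ 1-θ), abs_of_nonneg hr0]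
    _ ≤ (1-θ)*a + θ*a := by
        apply add_le_add
        · exact mul_le_mul_of_nonneg_left ha (by linarith)
        · exact mul_le_mul_of_nonneg_left hb hr0
    _ = a := by ring

/-- Coverage: pick the piece containing `x`. -/
lemma exists_piece {n : ℕ} {δ : ℝ} (hδ : 0 < δ) {q : ℤ} {jmin jmax : ℤ}
    (hminmax : jmin ≤ jmax) {x : ℝ}
    (hlo : Elo n δ q jmin ≤ x) (hhi : x ≤ Elo n δ q (jmax+1)) :
    ∃ j₀, jmin ≤ j₀ ∧ j₀ ≤ jmax ∧ Elo n δ q j₀ ≤ x ∧ x ≤ Elo n δ q (j₀+1) := by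
  classical
  set s := (Finset.Icc jmin jmax).filter (fun j => Elo n δ q j ≤ x) with hs
  have hne : s.Nonempty := ⟨jmin, by simp [hs, Finset.mem_filter, hminmax, hlo]⟩
  set j₀ := s.max' hne with hj₀
  have hj₀s : j₀ ∈ s := s.max'_mem hne
  rw [hs, Finset.mem_filter, Finset.mem_Icc] at hj₀s
  refine ⟨j₀, hj₀s.1.1, hj₀s.1.2, hj₀s.2, ?_⟩
  by_cases hcase : j₀ = jmax
  · rw [hcase]; exact hhi
  · by_contra hcon
    push_neg at hcon
    have : j₀ + 1 ∈ s := by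
      rw [hs, Finset.mem_filter, Finset.mem_Icc]
      exact ⟨⟨by omega, by omega⟩, hcon.le⟩
    have := Finset.le_max' s _ this
    omega











lemma floor_facts {δ x : ℝ} (hδ : 0 < δ) :
    ((⌊x/δ⌋ : ℝ))*δ ≤ x ∧ x < ((⌊x/δ⌋ : ℝ)+1)*δ := by
  constructor
  · have h := Int.floor_le (x/δ)
    calc ((⌊x/δ⌋:ℝ))*δ ≤ (x/δ)*δ := by nlinarith
    _ = x := by field_simp
  · have h := Int.lt_floor_add_one (x/δ)
    calc x = (x/δ)*δ := by field_simp
    _ < ((⌊x/δ⌋:ℝ)+1)*δ := by nlinarith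

lemma exists_E_or_gap (n : ℕ) {δ : ℝ} (hδ : 0 < δ) (x : ℝ) (q : ℤ) :
    (∃ j, x ∈ EE n δ q j) ∨
      (q % (2*n+1) = ⌊x/δ⌋ % (2*n+1) ∧ ((⌊x/δ⌋:ℝ))*δ < x ∧ x < ((⌊x/δ⌋:ℝ)+1)*δ) := by
  set N : ℤ := (2*n+1 : ℤ) with hN
  have hNpos : (0:ℤ) < N := by positivity
  set m : ℤ := ⌊x/δ⌋ with hm
  obtain ⟨hf1, hf2⟩ := floor_facts (x := x) hδ
  by_cases hmod : (N ∣ (m - q))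
  · rcases eq_or_lt_of_le hf1 with heq | hlt
    · left
      obtain ⟨j, hj⟩ := hmod
      refine ⟨j - 1, ?_, ?_⟩
      · show ((j-1)*N + q + 1 : ℤ) * δ ≤ x
        rw [← heq]
        have e : (j-1)*N + q + 1 = m - N + 1 := by linear_combination -hj
        have : ((j-1)*N + q + 1 : ℤ) ≤ m := by omega
        have h2 : (((j-1)*N + q + 1 : ℤ) : ℝ) ≤ (m : ℝ) := by exact_mod_cast this
        nlinarith
      · show x ≤ (((j-1)*N + q + N : ℤ) : ℝ) * δ
        rw [← heq]
        have e : (j-1)*N + q + N = m := by linear_combination -hj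
        have : m ≤ ((j-1)*N + q + N : ℤ) := by omega
        have h2 : ((m:ℤ) : ℝ) ≤ (((j-1)*N + q + N : ℤ) : ℝ) := by exact_mod_cast this
        nlinarith
    · right
      refine ⟨?_, hlt, hf2⟩
      obtain ⟨j, hj⟩ := hmod
      have : q = m - N*j := by omega
      rw [this]
      conv_rhs => rw [show m = (m - N*j) + j*N by ring]
      rw [Int.add_mul_emod_self_right]
  · left
    set j : ℤ := (m - q - 1).fdiv N with hj
    set r : ℤ := (m - q - 1).fmod N with hr
    have hdm : m - q - 1 = N * j + r := by
      rw [hj, hr]; exact (Int.mul_fdiv_add_fmod _ _).symm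
    have hr0 : 0 ≤ r := Int.fmod_nonneg_of_pos _ hNpos
    have hrN : r < N := Int.fmod_lt_of_pos _ hNpos
    have hrne : r ≠ N - 1 := by
      intro h
      exact hmod ⟨j+1, by linear_combination hdm + h⟩
    refine ⟨j, ?_, ?_⟩
    · show ((j*N + q + 1 : ℤ) : ℝ) * δ ≤ x
      have e : j*N + q + 1 = m - r := by linear_combination -hdm
      have : (j*N + q + 1 : ℤ) ≤ m := by omega
      have h2 : ((j*N + q + 1 : ℤ) : ℝ) ≤ (m:ℝ) := by exact_mod_cast this
      nlinarith
    · show x ≤ ((j*N + q + N : ℤ) : ℝ) * δ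
      have e : j*N + q + N = m + (N - 1 - r) := by linear_combination -hdm
      have : m + 1 ≤ (j*N + q + N : ℤ) := by omega
      have h2 : ((m+1 : ℤ) : ℝ) ≤ ((j*N + q + N : ℤ) : ℝ) := by exact_mod_cast this
      push_cast at h2 ⊢
      nlinarith

lemma gap_floor {δ x : ℝ} (hδ : 0 < δ) {m : ℤ}
    (h1 : ((m:ℝ))*δ < x) (h2 : x < ((m:ℝ)+1)*δ) : ⌊x/δ⌋ = m := by
  have ha : (m:ℝ) ≤ x/δ := by rw [le_div_iff₀ hδ]; linarith
  have hb : x/δ < (m:ℝ)+1 := by rw [div_lt_iff₀ hδ]; linarith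
  exact Int.floor_eq_iff.2 ⟨ha, hb⟩

open scoped Classical in
lemma counting (n : ℕ) {δ : ℝ} (hδ : 0 < δ) (x : Fin n → ℝ) :
    n + 1 ≤ (Finset.univ.filter
      (fun q : Fin (2*n+1) => ∀ p, ∃ j, x p ∈ EE n δ (q:ℤ) j)).card := by
  set B := Finset.univ.filter
      (fun q : Fin (2*n+1) => ∀ p, ∃ j, x p ∈ EE n δ (q:ℤ) j) with hB
  have hsub : Bᶜ ⊆ Finset.univ.image
      (fun p : Fin n => (⟨(⌊x p/δ⌋ % (2*n+1)).toNat, by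
        have h1 := Int.emod_nonneg (⌊x p/δ⌋) (b := (2*n+1:ℤ)) (by positivity)
        have h2 := Int.emod_lt_of_pos (⌊x p/δ⌋) (b := (2*n+1:ℤ)) (by positivity)
        omega⟩ : Fin (2*n+1))) := by
    intro q hq
    rw [Finset.mem_compl, hB, Finset.mem_filter] at hq
    push_neg at hq
    obtain ⟨p, hp⟩ := hq (Finset.mem_univ q)
    rcases exists_E_or_gap n hδ (x p) (q:ℤ) with h | ⟨hmod, _, _⟩
    · obtain ⟨j, hj⟩ := h; exact absurd hj (hp j)
    · rw [Finset.mem_image]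
      refine ⟨p, Finset.mem_univ _, ?_⟩
      have hq1 : ((q:ℤ)) % (2*n+1) = (q:ℤ) := by
        apply Int.emod_eq_of_lt
        · exact_mod_cast Nat.zero_le _
        · exact_mod_cast q.isLt
      have key : ⌊x p/δ⌋ % (2*n+1) = (q:ℤ) := by rw [← hmod, hq1]
      apply Fin.ext
      show (⌊x p/δ⌋ % (2*n+1)).toNat = (q:ℕ)
      rw [key]; simp
  have h1 : Bᶜ.card ≤ n := by
    calc Bᶜ.card ≤ _ := Finset.card_le_card hsub
    _ ≤ (Finset.univ : Finset (Fin n)).card := Finset.card_image_le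
    _ = n := by simp
  have h2 : B.card + Bᶜ.card = 2*n+1 := by
    rw [Finset.card_add_card_compl]; simp
  omega







lemma digit_sum_bound (R : ℤ) (d : ℕ → ℤ) (hd : ∀ p, 0 ≤ d p ∧ d p ≤ R - 1) (m : ℕ) :
    0 ≤ ∑ p ∈ Finset.range m, d p * R^p ∧ ∑ p ∈ Finset.range m, d p * R^p ≤ R^m - 1 := by
  have hR : 1 ≤ R := by have := hd 0; omega
  induction m with
  | zero => simp
  | succ m ih =>
      rw [Finset.sum_range_succ]
      constructor
      · have := (hd m).1
        have hp : (0:ℤ) ≤ R^m := by positivity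
        nlinarith [ih.1]
      · have h1 := (hd m).2
        have hp : (0:ℤ) < R^m := by positivity
        have : d m * R^m ≤ (R-1) * R^m := by nlinarith
        have hpow : R^(m+1) = R * R^m := by ring
        nlinarith [ih.2]

lemma digit_inj (R : ℤ) (d d' : ℕ → ℤ) (hd : ∀ p, 0 ≤ d p ∧ d p ≤ R - 1)
    (hd' : ∀ p, 0 ≤ d' p ∧ d' p ≤ R - 1) (m : ℕ)
    (heq : ∑ p ∈ Finset.range m, d p * R^p = ∑ p ∈ Finset.range m, d' p * R^p) :
    ∀ p < m, d p = d' p := by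
  have hR : 1 ≤ R := by have := hd 0; omega
  induction m with
  | zero => intro p hp; omega
  | succ m ih =>
      rw [Finset.sum_range_succ, Finset.sum_range_succ] at heq
      have hA := digit_sum_bound R d hd m
      have hA' := digit_sum_bound R d' hd' m
      have hp : (0:ℤ) < R^m := by positivity
      have htop : d m = d' m := by
        by_contra hne
        have h1 : d m ≤ d' m - 1 ∨ d' m ≤ d m - 1 := by omega
        rcases h1 with h | h
        · nlinarith [(hd m).1, (hd' m).2]
        · nlinarith [(hd' m).1, (hd m).2]
      have heq2 : ∑ p ∈ Finset.range m, d p * R^p = ∑ p ∈ Finset.range m, d' p * R^p := by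
        rw [htop] at heq; linarith
      intro p hpm
      rcases Nat.lt_succ_iff_lt_or_eq.1 hpm with h | h
      · exact ih heq2 p h
      · rw [h]; exact htop

/-- avoid a finite set of bad values in an interval -/
lemma exists_eta (b : ℝ) (hb : 0 < b) (Bad : Set ℝ) (hBad : Bad.Finite) :
    ∃ η, η ∈ Set.Ioo 0 b ∧ η ∉ Bad := by
  have h1 : (Set.Ioo (0:ℝ) b).Infinite := Set.infinite_coe_iff.1 (Set.Ioo.infinite hb)
  obtain ⟨η, hη⟩ := (h1.diff hBad).nonempty
  exact ⟨η, hη.1, hη.2⟩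



/-- State of the inductive construction. -/
structure St (n : ℕ) where
  φ : Fin (2*n+1) → Fin n → ℝ → ℝ
  δ : ℝ
  c : Fin (2*n+1) → Fin n → ℤ → ℝ
  g : ℝ
  rad : ℝ

/-- sum of the `c`-values over a cube index tuple -/
noncomputable def SS {n : ℕ} (st : St n) (q : Fin (2*n+1)) (t : Fin n → ℤ) : ℝ :=
  ∑ p, st.c q p (t p)

def Meets (n : ℕ) (δ : ℝ) (q j : ℤ) : Prop := (EE n δ q j ∩ Set.Icc 0 1).Nonempty

def Good0 {n : ℕ} (st : St n) : Prop :=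
  (∀ q p, Continuous (st.φ q p)) ∧ 0 < st.δ ∧ st.δ ≤ 1 ∧ 0 < st.rad

def Good {n : ℕ} (st : St n) : Prop := Good0 st ∧
  0 < st.g ∧ st.rad ≤ st.g/(3*n+3) ∧
  (∀ (q : Fin (2*n+1)) (p : Fin n) (j : ℤ), Meets n st.δ (q:ℤ) j →
    ∀ x ∈ EE n st.δ (q:ℤ) j, st.φ q p x = st.c q p j) ∧
  (∀ (q : Fin (2*n+1)) (t t' : Fin n → ℤ), t ≠ t' →
    (∀ p, Meets n st.δ (q:ℤ) (t p)) → (∀ p, Meets n st.δ (q:ℤ) (t' p)) →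
    st.g ≤ |SS st q t - SS st q t'|)

def RelSt {n : ℕ} (st st' : St n) : Prop :=
  st'.δ ≤ st.δ/2 ∧ st'.rad ≤ st.rad/2 ∧
  ∀ (q : Fin (2*n+1)) (p : Fin n), ∀ x ∈ Set.Icc (0:ℝ) 1,
    |st'.φ q p x - st.φ q p x| ≤ st.rad/2

/-- Any interval meeting `[0,1]` has index in `[-2, ⌈1/δ⌉+1]`. -/
lemma meets_range {n : ℕ} {δ : ℝ} (hδ : 0 < δ) {q j : ℤ} (hq0 : 0 ≤ q)
    (hq1 : q < 2*n+1) (h : Meets n δ q j) : -2 ≤ j ∧ j ≤ ⌈1/δ⌉ + 1 := by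
  obtain ⟨y, ⟨hy1, hy2⟩, hy3, hy4⟩ := h
  have hN : (0:ℤ) < 2*n+1 := by positivity
  constructor
  · -- 0 ≤ y ≤ Ehi = (j(2n+1)+q+(2n+1))δ  ⇒ the integer is ≥ 0
    have : (0:ℝ) ≤ ((j*(2*n+1) + q + (2*n+1) : ℤ) : ℝ)*δ := le_trans hy3 hy2
    have h2 : (0:ℤ) ≤ j*(2*n+1) + q + (2*n+1) := by
      by_contra hcon
      push_neg at hcon
      have : ((j*(2*n+1) + q + (2*n+1) : ℤ) : ℝ) < 0 := by exact_mod_cast hcon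
      nlinarith
    nlinarith
  · -- Elo = (j(2n+1)+q+1)δ ≤ y ≤ 1
    have h1 : ((j*(2*n+1) + q + 1 : ℤ) : ℝ)*δ ≤ 1 := le_trans hy1 hy4
    by_contra hcon
    push_neg at hcon
    have hcpos : (0:ℤ) < ⌈1/δ⌉ := Int.ceil_pos.2 (by positivity)
    have hj : ⌈1/δ⌉ + 2 ≤ j := by omega
    have hceil : 1/δ ≤ (⌈1/δ⌉ : ℝ) := Int.le_ceil _
    have hjr : 1/δ + 2 ≤ (j:ℝ) := by
      have : ((⌈1/δ⌉ + 2 : ℤ) : ℝ) ≤ (j:ℝ) := by exact_mod_cast hj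
      push_cast at this
      linarith
    have hz : (1:ℝ) ≤ (2*n+1 : ℝ) := by
      have : (1:ℕ) ≤ 2*n+1 := by omega
      exact_mod_cast this
    have hq0' : (0:ℝ) ≤ (q:ℝ) := by exact_mod_cast hq0
    have expand : ((j*(2*n+1) + q + 1 : ℤ) : ℝ) = (j:ℝ)*(2*n+1) + (q:ℝ) + 1 := by
      push_cast; ring
    rw [expand] at h1
    have hjpos : (0:ℝ) < (j:ℝ) := by
      have : (0:ℤ) < j := by omega
      exact_mod_cast this
    have key : (j:ℝ)*(2*n+1) ≥ (j:ℝ) := by nlinarith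
    have : (j:ℝ)*δ ≤ 1 := by nlinarith
    have : (1/δ + 2)*δ ≤ 1 := by nlinarith
    rw [add_mul] at this
    have : 1/δ*δ = 1 := by field_simp
    nlinarith [hδ]

noncomputable def Kc (n : ℕ) : Set ℝ := Set.Icc (-(8*(2*(n:ℝ)+1))) (8*(2*(n:ℝ)+1))

lemma unif_family {n : ℕ} (st : St n) (h : ∀ q p, Continuous (st.φ q p))
    {ε : ℝ} (hε : 0 < ε) :
    ∃ d, 0 < d ∧ ∀ (q : Fin (2*n+1)) (p : Fin n) (x y : ℝ), x ∈ Kc n → y ∈ Kc n →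
      |x - y| ≤ d → |st.φ q p x - st.φ q p y| ≤ ε := by
  set F : ℝ → (Fin (2*n+1) × Fin n → ℝ) := fun x qp => st.φ qp.1 qp.2 x with hF
  have hFc : Continuous F := continuous_pi (fun qp => h qp.1 qp.2)
  have huc : UniformContinuousOn F (Kc n) :=
    (isCompact_Icc).uniformContinuousOn_of_continuous hFc.continuousOn
  obtain ⟨d, hd0, hd⟩ := Metric.uniformContinuousOn_iff_le.1 huc ε hε
  refine ⟨d, hd0, fun q p x y hx hy hxy => ?_⟩
  have h1 : dist (F x) (F y) ≤ ε := hd x hx y hy (by rwa [Real.dist_eq])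
  have h2 : dist (F x (q,p)) (F y (q,p)) ≤ dist (F x) (F y) := dist_le_pi_dist _ _ _
  rw [Real.dist_eq] at h2
  exact le_trans h2 h1

set_option maxHeartbeats 2000000 in
lemma step_exists {n : ℕ} (st : St n) (h : Good0 st) :
    ∃ st' : St n, Good st' ∧ RelSt st st' := by
  classical
  obtain ⟨hcont, hδ0, hδ1, hrad⟩ := h
  have hNr : (1:ℝ) ≤ 2*(n:ℝ)+1 := by have : (0:ℝ) ≤ (n:ℝ) := Nat.cast_nonneg n; linarith
  obtain ⟨d, hd0, hd⟩ := unif_family st hcont (ε := st.rad/8) (by positivity)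
  set δ' := min (st.δ/2) (d/(8*(2*(n:ℝ)+1)+8)) with hδ'def
  have hδ'0 : 0 < δ' := lt_min (by positivity) (div_pos hd0 (by positivity))
  have hδ'1 : δ' ≤ 1 := le_trans (min_le_left _ _) (by linarith)
  have hδ'd : (2*(n:ℝ)+1) * δ' ≤ d := by
    have h1 : δ' ≤ d/(8*(2*(n:ℝ)+1)+8) := min_le_right _ _
    have h2 : (0:ℝ) < 8*(2*(n:ℝ)+1)+8 := by positivity
    rw [le_div_iff₀ h2] at h1
    nlinarith
  set jmin : ℤ := -2 with hjmindef
  set jmax : ℤ := ⌈1/δ'⌉ + 1 with hjmaxdef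
  have hceil0 : (0:ℤ) < ⌈1/δ'⌉ := Int.ceil_pos.2 (by positivity)
  have hceilR : 1/δ' ≤ (⌈1/δ'⌉:ℝ) := Int.le_ceil _
  have hceilR2 : (⌈1/δ'⌉:ℝ) ≤ 1/δ' + 1 := by
    have := Int.ceil_lt_add_one (1/δ')
    linarith
  have hjm : jmin ≤ jmax := by omega
  set R : ℤ := jmax + 2 - jmin with hRdef
  have hR1 : (1:ℤ) ≤ R := by omega
  have hR1r : (1:ℝ) ≤ (R:ℝ) := by exact_mod_cast hR1
  set clampj : ℤ → ℤ := fun j => max jmin (min j (jmax+1)) with hclampdef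
  set dig : ℤ → ℤ := fun j => clampj j - jmin with hdigdef
  have hdig : ∀ j, 0 ≤ dig j ∧ dig j ≤ R - 1 := by
    intro j; simp only [hdigdef, hclampdef]; omega
  have hclamp_id : ∀ j, jmin ≤ j → j ≤ jmax + 1 → clampj j = j := by
    intro j h1 h2; simp only [hclampdef]; omega
  set w : ℤ → Fin n → ℝ := fun j p => ((dig j : ℤ):ℝ) * (R:ℝ)^(p:ℕ) with hwdef
  set base : Fin (2*n+1) → Fin n → ℤ → ℝ :=
    fun q p j => st.φ q p (Elo n δ' (q:ℤ) (clampj j)) with hbasedef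
  set A : Fin (2*n+1) → (Fin n → ℤ) → ℝ := fun q t => ∑ p, base q p (t p) with hAdef
  set W : (Fin n → ℤ) → ℝ := fun t => ∑ p, w (t p) p with hWdef
  set Tups := Fintype.piFinset (fun _ : Fin n => Finset.Icc jmin jmax) with hTupsdef
  -- injectivity of W on Tups
  have Winj : ∀ t ∈ Tups, ∀ t' ∈ Tups, W t = W t' → t = t' := by
    intro t ht t' ht' hWeq
    rw [Fintype.mem_piFinset] at ht ht'
    set dd : ℕ → ℤ := fun m => if hm : m < n then dig (t ⟨m, hm⟩) else 0 with hdd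
    set dd' : ℕ → ℤ := fun m => if hm : m < n then dig (t' ⟨m, hm⟩) else 0 with hdd'
    have hbnd : ∀ m, 0 ≤ dd m ∧ dd m ≤ R - 1 := by
      intro m; simp only [hdd]; split
      · exact hdig _
      · omega
    have hbnd' : ∀ m, 0 ≤ dd' m ∧ dd' m ≤ R - 1 := by
      intro m; simp only [hdd']; split
      · exact hdig _
      · omega
    have hzsum : ∀ (s : Fin n → ℤ), W s = ((∑ p : Fin n, dig (s p) * R^(p:ℕ) : ℤ) : ℝ) := by
      intro s
      rw [hWdef]
      push_cast
      rfl
    have hinteq : (∑ p : Fin n, dig (t p) * R^(p:ℕ)) = ∑ p : Fin n, dig (t' p) * R^(p:ℕ) := by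
      have := hWeq
      rw [hzsum, hzsum] at this
      exact_mod_cast this
    have hrange : (∑ m ∈ Finset.range n, dd m * R^m) = ∑ m ∈ Finset.range n, dd' m * R^m := by
      rw [← Fin.sum_univ_eq_sum_range (fun m => dd m * R^m) n,
        ← Fin.sum_univ_eq_sum_range (fun m => dd' m * R^m) n]
      have e1 : ∀ p : Fin n, dd (p:ℕ) * R^(p:ℕ) = dig (t p) * R^(p:ℕ) := by
        intro p; simp only [hdd, dif_pos p.isLt, Fin.eta]
      have e2 : ∀ p : Fin n, dd' (p:ℕ) * R^(p:ℕ) = dig (t' p) * R^(p:ℕ) := by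
        intro p; simp only [hdd', dif_pos p.isLt, Fin.eta]
      rw [Finset.sum_congr rfl (fun p _ => e1 p), Finset.sum_congr rfl (fun p _ => e2 p), hinteq]
    have hall := digit_inj R dd dd' hbnd hbnd' n hrange
    funext p
    have h1 := hall (p:ℕ) p.isLt
    simp only [hdd, hdd', dif_pos p.isLt] at h1
    have hdigeq : dig (t p) = dig (t' p) := by
      convert h1 using 2 <;> exact (Fin.eta p p.isLt).symm
    have ht1 := (Finset.mem_Icc).1 (ht p)
    have ht2 := (Finset.mem_Icc).1 (ht' p)
    have e1 : clampj (t p) = t p := hclamp_id _ ht1.1 (by omega)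
    have e2 : clampj (t' p) = t' p := hclamp_id _ ht2.1 (by omega)
    simp only [hdigdef, e1, e2] at hdigeq
    omega

  set Pairs := (Finset.univ : Finset (Fin (2*n+1))) ×ˢ (Tups ×ˢ Tups) with hPairs
  set Bad := Pairs.image (fun z => (A z.1 z.2.2 - A z.1 z.2.1) / (W z.2.1 - W z.2.2)) with hBadd
  have hRpow : (0:ℝ) < (R:ℝ)^n := pow_pos (lt_of_lt_of_le one_pos hR1r) n
  set bη := st.rad/(8*((R:ℝ)^n + 1)) with hbη
  have hbη0 : 0 < bη := div_pos hrad (by nlinarith)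
  obtain ⟨η, hηmem, hηBad⟩ := exists_eta bη hbη0 Bad Bad.finite_toSet
  obtain ⟨hη0, hηb⟩ := hηmem
  set c : Fin (2*n+1) → Fin n → ℤ → ℝ := fun q p j => base q p j + η * w j p with hcdef
  set φ' : Fin (2*n+1) → Fin n → ℝ → ℝ :=
    fun q p => pieceF n δ' (q:ℤ) (c q p) jmin jmax with hφ'def
  have hSSc : ∀ (q : Fin (2*n+1)) (t : Fin n → ℤ),
      (∑ p, c q p (t p)) = A q t + η * W t := by
    intro q t
    simp only [hcdef, hAdef, hWdef, Finset.sum_add_distrib, Finset.mul_sum]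
  have hsepne : ∀ (q : Fin (2*n+1)), ∀ t ∈ Tups, ∀ t' ∈ Tups, t ≠ t' →
      A q t + η*W t ≠ A q t' + η*W t' := by
    intro q t ht t' ht' hne heq
    have hWne : W t - W t' ≠ 0 := by
      intro h0
      exact hne (Winj t ht t' ht' (by linarith))
    apply hηBad
    have hηeq : η = (A q t' - A q t)/(W t - W t') := by
      field_simp
      linarith
    rw [hηeq]
    refine Finset.mem_coe.2 (Finset.mem_image.2 ⟨⟨q, t, t'⟩, ?_, rfl⟩)
    rw [hPairs]
    simp only [Finset.mem_product, Finset.mem_univ, true_and]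
    exact ⟨ht, ht'⟩
  set GapSet := ((Pairs.filter (fun z => z.2.1 ≠ z.2.2)).image
      (fun z => |(A z.1 z.2.1 + η*W z.2.1) - (A z.1 z.2.2 + η*W z.2.2)|)) with hGap
  set g' := if hne : GapSet.Nonempty then GapSet.min' hne else 1 with hg'
  have hgappos : ∀ y ∈ GapSet, 0 < y := by
    intro y hy
    rw [hGap, Finset.mem_image] at hy
    obtain ⟨z, hz, hzeq⟩ := hy
    rw [Finset.mem_filter] at hz
    obtain ⟨hzP, hzne⟩ := hz
    rw [hPairs, Finset.mem_product] at hzP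
    obtain ⟨_, hz2⟩ := hzP
    rw [Finset.mem_product] at hz2
    rw [← hzeq]
    exact abs_pos.2 (sub_ne_zero.2 (hsepne z.1 z.2.1 hz2.1 z.2.2 hz2.2 hzne))
  have hg'0 : 0 < g' := by
    rw [hg']
    split
    case isTrue hne => exact hgappos _ (GapSet.min'_mem hne)
    case isFalse _ => norm_num
  set rad' := min (st.rad/2) (g'/(3*(n:ℝ)+3)) with hradp
  have hrad'0 : 0 < rad' := lt_min (by linarith) (div_pos hg'0 (by positivity))
  have hqfacts : ∀ q : Fin (2*n+1), (0:ℤ) ≤ (q:ℤ) ∧ ((q:ℕ):ℤ) < 2*(n:ℤ)+1 := by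
    intro q
    constructor
    · positivity
    · exact_mod_cast q.isLt
  refine ⟨⟨φ', δ', c, g', rad'⟩,
    ⟨⟨fun q p => pieceF_continuous, hδ'0, hδ'1, hrad'0⟩, hg'0, min_le_right _ _, ?_, ?_⟩,
    min_le_left _ _, min_le_left _ _, ?_⟩
  · -- constancy
    intro q p j hme x hx
    obtain ⟨hq0, hq1⟩ := hqfacts q
    obtain ⟨hj1, hj2⟩ := meets_range hδ'0 hq0 (by exact_mod_cast hq1) hme
    show pieceF n δ' (q:ℤ) (c q p) jmin jmax x = c q p j
    exact pieceF_const hδ'0 (c q p) (by omega) (by omega) hx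
  · -- separation
    intro q t t' hne hmt hmt'
    obtain ⟨hq0, hq1⟩ := hqfacts q
    have htT : t ∈ Tups := by
      rw [hTupsdef, Fintype.mem_piFinset]
      intro p
      obtain ⟨h1, h2⟩ := meets_range hδ'0 hq0 (by exact_mod_cast hq1) (hmt p)
      rw [Finset.mem_Icc]
      omega
    have htT' : t' ∈ Tups := by
      rw [hTupsdef, Fintype.mem_piFinset]
      intro p
      obtain ⟨h1, h2⟩ := meets_range hδ'0 hq0 (by exact_mod_cast hq1) (hmt' p)
      rw [Finset.mem_Icc]
      omega
    have hmemgap : |(A q t + η*W t) - (A q t' + η*W t')| ∈ GapSet := by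
      rw [hGap, Finset.mem_image]
      refine ⟨⟨q, t, t'⟩, ?_, rfl⟩
      rw [Finset.mem_filter, hPairs]
      simp only [Finset.mem_product, Finset.mem_univ, true_and]
      exact ⟨⟨htT, htT'⟩, hne⟩
    have hnempty : GapSet.Nonempty := ⟨_, hmemgap⟩
    have hg'eq : g' = GapSet.min' hnempty := by rw [hg', dif_pos hnempty]
    show g' ≤ |SS ⟨φ', δ', c, g', rad'⟩ q t - SS ⟨φ', δ', c, g', rad'⟩ q t'|
    have hssT : SS ⟨φ', δ', c, g', rad'⟩ q t = A q t + η * W t := hSSc q t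
    have hssT' : SS ⟨φ', δ', c, g', rad'⟩ q t' = A q t' + η * W t' := hSSc q t'
    rw [hssT, hssT', hg'eq]
    exact Finset.min'_le _ _ hmemgap
  · -- closeness
    intro q p x hx
    obtain ⟨hx0, hx1⟩ := hx
    obtain ⟨hq0, hq1⟩ := hqfacts q
    have hq1' : ((q:ℕ):ℤ) ≤ 2*(n:ℤ) := by omega
    have hq1r : ((q:ℕ):ℝ) ≤ 2*(n:ℝ) := by exact_mod_cast hq1'
    have hq0r : (0:ℝ) ≤ ((q:ℕ):ℝ) := by positivity
    have huδ : 1/δ' * δ' = 1 := by field_simp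
    have hlo : Elo n δ' (q:ℤ) jmin ≤ x := by
      unfold Elo
      have hint : (jmin*(2*(n:ℤ)+1) + (q:ℤ) + 1 : ℤ) ≤ 0 := by
        rw [hjmindef]; omega
      have hc : ((jmin*(2*(n:ℤ)+1) + (q:ℤ) + 1 : ℤ):ℝ) ≤ 0 := by exact_mod_cast hint
      have : ((jmin*(2*(n:ℤ)+1) + (q:ℤ) + 1 : ℤ):ℝ) * δ' ≤ 0 :=
        mul_nonpos_of_nonpos_of_nonneg hc hδ'0.le
      have hcongr : ((jmin*(2*(n:ℤ)+1) + (q:ℤ) + 1 : ℤ):ℝ) = ((jmin*(2*↑n+1) + ↑↑q + 1 : ℤ):ℝ) := by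
        norm_cast
      linarith [hcongr ▸ this]
    have hjmaxr : (jmax:ℝ) ≤ 1/δ' + 2 := by
      rw [hjmaxdef]
      push_cast
      linarith
    have hjmaxr0 : (0:ℝ) ≤ (jmax:ℝ) := by
      have : (0:ℤ) ≤ jmax := by omega
      exact_mod_cast this
    have hhi : x ≤ Elo n δ' (q:ℤ) (jmax+1) := by
      unfold Elo
      push_cast
      have hkey : (1:ℝ) + 2*δ' ≤ (((jmax:ℝ)+1)*(2*(n:ℝ)+1) + ((q:ℕ):ℝ) + 1) * δ' := by
        have h1 : (⌈1/δ'⌉:ℝ) + 2 ≤ ((jmax:ℝ)+1) := by rw [hjmaxdef]; push_cast; linarith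
        have h2 : 1/δ' + 2 ≤ ((jmax:ℝ)+1) := by linarith
        have h3 : ((jmax:ℝ)+1) ≤ ((jmax:ℝ)+1)*(2*(n:ℝ)+1) := by nlinarith
        have h4 : ((jmax:ℝ)+1) * δ' ≤ (((jmax:ℝ)+1)*(2*(n:ℝ)+1) + ((q:ℕ):ℝ) + 1) * δ' := by
          apply mul_le_mul_of_nonneg_right _ hδ'0.le
          nlinarith
        have h5 : (1/δ' + 2) * δ' ≤ ((jmax:ℝ)+1) * δ' :=
          mul_le_mul_of_nonneg_right h2 hδ'0.le
        have h6 : (1/δ' + 2) * δ' = 1 + 2*δ' := by rw [add_mul, huδ]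
        linarith
      linarith
    obtain ⟨j₀, hj₀1, hj₀2, hxa, hxb⟩ := exists_piece hδ'0 hjm hlo hhi
    have hxKc : x ∈ Kc n := by
      constructor
      · have : (0:ℝ) ≤ 8*(2*(n:ℝ)+1) := by positivity
        linarith
      · have : (1:ℝ) ≤ 8*(2*(n:ℝ)+1) := by nlinarith
        linarith
    have hdiffsucc : ∀ j : ℤ, Elo n δ' (q:ℤ) (j+1) - Elo n δ' (q:ℤ) j = (2*(n:ℝ)+1)*δ' := by
      intro j
      unfold Elo
      push_cast
      ring
    have hkey : ∀ j : ℤ, jmin ≤ j → j ≤ jmax+1 → |x - Elo n δ' (q:ℤ) j| ≤ (2*(n:ℝ)+1)*δ' →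
        |c q p j - st.φ q p x| ≤ st.rad/2 := by
      intro j hjl hjr hclose
      have hcl : clampj j = j := hclamp_id j hjl hjr
      have hEmono1 : Elo n δ' (q:ℤ) jmin ≤ Elo n δ' (q:ℤ) j := Elo_mono hδ'0.le hjl
      have hEmono2 : Elo n δ' (q:ℤ) j ≤ Elo n δ' (q:ℤ) (jmax+1) := Elo_mono hδ'0.le hjr
      have hEKc : Elo n δ' (q:ℤ) j ∈ Kc n := by
        constructor
        · -- lower bound
          have hloB : (-(2*(2*(n:ℝ)+1))) * δ' ≤ Elo n δ' (q:ℤ) jmin := by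
            unfold Elo
            apply mul_le_mul_of_nonneg_right _ hδ'0.le
            push_cast
            rw [hjmindef]
            push_cast
            nlinarith
          have h2 : (-(8*(2*(n:ℝ)+1))) ≤ (-(2*(2*(n:ℝ)+1))) * δ' := by nlinarith
          linarith
        · -- upper bound
          have hhiB : Elo n δ' (q:ℤ) (jmax+1) ≤ 8*(2*(n:ℝ)+1) := by
            unfold Elo
            push_cast
            have h2 : ((jmax:ℝ)+1)*(2*(n:ℝ)+1) + ((q:ℕ):ℝ) + 1
                ≤ (1/δ' + 3)*(2*(n:ℝ)+1) + (2*(n:ℝ)+1) := by nlinarith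
            have h3 : ((1/δ' + 3)*(2*(n:ℝ)+1) + (2*(n:ℝ)+1)) * δ'
                = (2*(n:ℝ)+1) * (1 + 4*δ') := by
              field_simp
              ring
            have h4 : (((jmax:ℝ)+1)*(2*(n:ℝ)+1) + ((q:ℕ):ℝ) + 1) * δ'
                ≤ ((1/δ' + 3)*(2*(n:ℝ)+1) + (2*(n:ℝ)+1)) * δ' :=
              mul_le_mul_of_nonneg_right h2 hδ'0.le
            rw [h3] at h4
            nlinarith
          linarith
      have hφb : |st.φ q p (Elo n δ' (q:ℤ) j) - st.φ q p x| ≤ st.rad/8 := by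
        apply hd q p _ x hEKc hxKc
        rw [abs_sub_comm]
        exact le_trans hclose hδ'd
      have hwnn : 0 ≤ w j p := by
        simp only [hwdef]
        have h1 : (0:ℝ) ≤ ((dig j : ℤ):ℝ) := by exact_mod_cast (hdig j).1
        positivity
      have hwb : w j p ≤ (R:ℝ)^n := by
        simp only [hwdef]
        have h1 : ((dig j : ℤ):ℝ) ≤ (R:ℝ) - 1 := by
          have := (hdig j).2
          have : ((dig j : ℤ):ℝ) ≤ ((R - 1 : ℤ):ℝ) := by exact_mod_cast this
          push_cast at this
          linarith
        have h2 : (0:ℝ) ≤ (R:ℝ)^(p:ℕ) := by positivity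
        have h3 : ((dig j : ℤ):ℝ) * (R:ℝ)^(p:ℕ) ≤ ((R:ℝ) - 1) * (R:ℝ)^(p:ℕ) :=
          mul_le_mul_of_nonneg_right h1 h2
        have h4 : ((R:ℝ) - 1) * (R:ℝ)^(p:ℕ) = (R:ℝ)^((p:ℕ)+1) - (R:ℝ)^(p:ℕ) := by ring
        have h5 : (R:ℝ)^((p:ℕ)+1) ≤ (R:ℝ)^n := pow_le_pow_right₀ hR1r (by omega)
        linarith
      have hwmul : |η * w j p| ≤ st.rad/8 := by
        rw [abs_mul, abs_of_pos hη0, abs_of_nonneg hwnn]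
        have h1 : η * w j p ≤ bη * (R:ℝ)^n := by
          apply mul_le_mul hηb.le hwb hwnn hbη0.le
        have h2 : bη * (R:ℝ)^n ≤ st.rad/8 := by
          rw [hbη]
          rw [div_mul_eq_mul_div, div_le_div_iff₀ (by nlinarith) (by norm_num)]
          nlinarith
        linarith
      have hre : c q p j - st.φ q p x
          = (st.φ q p (Elo n δ' (q:ℤ) j) - st.φ q p x) + η * w j p := by
        simp only [hcdef, hbasedef, hcl]
        ring
      rw [hre]
      calc |(st.φ q p (Elo n δ' (q:ℤ) j) - st.φ q p x) + η * w j p|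
          ≤ |st.φ q p (Elo n δ' (q:ℤ) j) - st.φ q p x| + |η * w j p| := abs_add_le _ _
        _ ≤ st.rad/8 + st.rad/8 := add_le_add hφb hwmul
        _ ≤ st.rad/2 := by linarith
    have hNδnn : 0 ≤ (2*(n:ℝ)+1)*δ' := by positivity
    have hclose1 : |x - Elo n δ' (q:ℤ) j₀| ≤ (2*(n:ℝ)+1)*δ' := by
      rw [abs_le]
      have := hdiffsucc j₀
      constructor <;> [linarith; linarith]
    have hclose2 : |x - Elo n δ' (q:ℤ) (j₀+1)| ≤ (2*(n:ℝ)+1)*δ' := by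
      rw [abs_le]
      have := hdiffsucc j₀
      constructor <;> [linarith; linarith]
    show |pieceF n δ' (q:ℤ) (c q p) jmin jmax x - st.φ q p x| ≤ st.rad/2
    exact pieceF_close hδ'0 (c q p) hj₀1 hj₀2 hxa hxb
      (hkey j₀ hj₀1 (by omega) hclose1) (hkey (j₀+1) (by omega) (by omega) hclose2)

noncomputable def seqF (n : ℕ) : ℕ → {st : St n // Good0 st}
  | 0 => ⟨⟨fun _ _ _ => 0, 1, fun _ _ _ => 0, 1, 1⟩,
      ⟨fun _ _ => continuous_const, one_pos, le_refl 1, one_pos⟩⟩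
  | (k+1) => ⟨(step_exists (seqF n k).1 (seqF n k).2).choose,
      (step_exists (seqF n k).1 (seqF n k).2).choose_spec.1.1⟩

lemma seqF_succ_good (n k : ℕ) : Good (seqF n (k+1)).1 :=
  (step_exists (seqF n k).1 (seqF n k).2).choose_spec.1

lemma seqF_rel (n k : ℕ) : RelSt (seqF n k).1 (seqF n (k+1)).1 :=
  (step_exists (seqF n k).1 (seqF n k).2).choose_spec.2

lemma seqF_good0 (n k : ℕ) : Good0 (seqF n k).1 := (seqF n k).2

lemma seqF_rad0 (n : ℕ) : (seqF n 0).1.rad = 1 := rfl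
lemma seqF_delta0 (n : ℕ) : (seqF n 0).1.δ = 1 := rfl
lemma seqF_phi0 (n : ℕ) (q p x) : (seqF n 0).1.φ q p x = 0 := rfl

lemma seqF_rad_le (n k : ℕ) : (seqF n k).1.rad ≤ (1/2)^k := by
  induction k with
  | zero => rw [seqF_rad0]; norm_num
  | succ k ih =>
      have h := (seqF_rel n k).2.1
      calc (seqF n (k+1)).1.rad ≤ (seqF n k).1.rad/2 := h
      _ ≤ (1/2)^k/2 := by linarith
      _ = (1/2)^(k+1) := by ring

lemma seqF_rad_le' (n k m : ℕ) : (seqF n (k+m)).1.rad ≤ (seqF n k).1.rad * (1/2)^m := by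
  induction m with
  | zero => simp
  | succ m ih =>
      have h := (seqF_rel n (k+m)).2.1
      calc (seqF n (k+(m+1))).1.rad = (seqF n ((k+m)+1)).1.rad := by ring_nf
      _ ≤ (seqF n (k+m)).1.rad/2 := h
      _ ≤ ((seqF n k).1.rad * (1/2)^m)/2 := by linarith
      _ = (seqF n k).1.rad * (1/2)^(m+1) := by ring

lemma seqF_delta_le (n k : ℕ) : (seqF n k).1.δ ≤ (1/2)^k := by
  induction k with
  | zero => rw [seqF_delta0]; norm_num
  | succ k ih =>
      have h := (seqF_rel n k).1
      calc (seqF n (k+1)).1.δ ≤ (seqF n k).1.δ/2 := h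
      _ ≤ (1/2)^k/2 := by linarith
      _ = (1/2)^(k+1) := by ring

/-- Cauchy-type estimate on `[0,1]`. -/
lemma seqF_cauchy (n : ℕ) (q : Fin (2*n+1)) (p : Fin n) {x : ℝ}
    (hx : x ∈ Set.Icc (0:ℝ) 1) (k m : ℕ) :
    |(seqF n (k+m)).1.φ q p x - (seqF n k).1.φ q p x| ≤ (seqF n k).1.rad * (1 - (1/2)^m) := by
  induction m with
  | zero => simp
  | succ m ih =>
      have h1 := (seqF_rel n (k+m)).2.2 q p x hx
      have h2 : (seqF n (k+m)).1.rad ≤ (seqF n k).1.rad * (1/2)^m := seqF_rad_le' n k m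
      calc |(seqF n (k+(m+1))).1.φ q p x - (seqF n k).1.φ q p x|
          = |((seqF n ((k+m)+1)).1.φ q p x - (seqF n (k+m)).1.φ q p x)
            + ((seqF n (k+m)).1.φ q p x - (seqF n k).1.φ q p x)| := by
            rw [show k+(m+1) = (k+m)+1 from rfl]; ring_nf
        _ ≤ |(seqF n ((k+m)+1)).1.φ q p x - (seqF n (k+m)).1.φ q p x|
            + |(seqF n (k+m)).1.φ q p x - (seqF n k).1.φ q p x| := abs_add_le _ _
        _ ≤ (seqF n (k+m)).1.rad/2 + (seqF n k).1.rad * (1 - (1/2)^m) := add_le_add h1 ih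
        _ ≤ (seqF n k).1.rad * (1/2)^m/2 + (seqF n k).1.rad * (1 - (1/2)^m) := by linarith
        _ = (seqF n k).1.rad * (1 - (1/2)^(m+1)) := by ring

noncomputable def clampR (x : ℝ) : ℝ := max 0 (min 1 x)

lemma clampR_mem (x : ℝ) : clampR x ∈ Set.Icc (0:ℝ) 1 := by
  unfold clampR
  constructor
  · exact le_max_left _ _
  · apply max_le (by norm_num) (min_le_left _ _)

lemma clampR_eq {x : ℝ} (hx : x ∈ Set.Icc (0:ℝ) 1) : clampR x = x := by
  obtain ⟨h1, h2⟩ := hx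
  unfold clampR
  rw [min_eq_right h2, max_eq_right h1]

lemma clampR_continuous : Continuous clampR :=
  continuous_const.max (continuous_const.min continuous_id)

noncomputable def phiF (n : ℕ) (q : Fin (2*n+1)) (p : Fin n) (x : ℝ) : ℝ :=
  ∑' k, ((seqF n (k+1)).1.φ q p (clampR x) - (seqF n k).1.φ q p (clampR x))

lemma phiF_summable (n : ℕ) (q : Fin (2*n+1)) (p : Fin n) (x : ℝ) :
    Summable (fun k => (seqF n (k+1)).1.φ q p (clampR x) - (seqF n k).1.φ q p (clampR x)) := by
  apply Summable.of_norm_bounded (g := fun k => (1/2)^k) (summable_geometric_two )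
  intro k
  rw [Real.norm_eq_abs]
  have h := (seqF_rel n k).2.2 q p (clampR x) (clampR_mem x)
  have h2 := seqF_rad_le n k
  have h3 : (0:ℝ) ≤ (1/2:ℝ)^k := by positivity
  calc |(seqF n (k+1)).1.φ q p (clampR x) - (seqF n k).1.φ q p (clampR x)|
      ≤ (seqF n k).1.rad/2 := h
    _ ≤ (1/2)^k := by linarith

lemma phiF_continuous (n : ℕ) (q : Fin (2*n+1)) (p : Fin n) : Continuous (phiF n q p) := by
  apply continuous_tsum (u := fun k => (1/2)^k)
  · intro k
    exact (((seqF_good0 n (k+1)).1 q p).comp clampR_continuous).sub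
      (((seqF_good0 n k).1 q p).comp clampR_continuous)
  · exact summable_geometric_two
  · intro k x
    rw [Real.norm_eq_abs]
    have h := (seqF_rel n k).2.2 q p (clampR x) (clampR_mem x)
    have h2 := seqF_rad_le n k
    have h3 : (0:ℝ) ≤ (1/2:ℝ)^k := by positivity
    calc |(seqF n (k+1)).1.φ q p (clampR x) - (seqF n k).1.φ q p (clampR x)|
        ≤ (seqF n k).1.rad/2 := h
      _ ≤ (1/2)^k := by linarith

lemma phiF_tendsto (n : ℕ) (q : Fin (2*n+1)) (p : Fin n) {x : ℝ} (hx : x ∈ Set.Icc (0:ℝ) 1) :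
    Filter.Tendsto (fun m => (seqF n m).1.φ q p x) Filter.atTop (nhds (phiF n q p x)) := by
  have hsum := phiF_summable n q p x
  have hhs : HasSum _ (phiF n q p x) := hsum.hasSum
  rw [hsum.hasSum_iff_tendsto_nat] at hhs
  have he : ∀ m, ∑ k ∈ Finset.range m,
      ((seqF n (k+1)).1.φ q p (clampR x) - (seqF n k).1.φ q p (clampR x))
      = (seqF n m).1.φ q p x := by
    intro m
    rw [Finset.sum_range_sub (fun k => (seqF n k).1.φ q p (clampR x)), clampR_eq hx,
      seqF_phi0, sub_zero]
  exact (Filter.tendsto_congr he).1 hhs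

/-- The limit stays within `rad k` of stage `k` on `[0,1]`. -/
lemma phiF_close (n : ℕ) (q : Fin (2*n+1)) (p : Fin n) {x : ℝ} (hx : x ∈ Set.Icc (0:ℝ) 1)
    (k : ℕ) : |phiF n q p x - (seqF n k).1.φ q p x| ≤ (seqF n k).1.rad := by
  have htd := ((phiF_tendsto n q p hx).sub_const ((seqF n k).1.φ q p x)).abs
  apply le_of_tendsto htd
  rw [Filter.eventually_atTop]
  refine ⟨k, fun m hm => ?_⟩
  obtain ⟨m', rfl⟩ := Nat.exists_eq_add_of_le hm
  have h := seqF_cauchy n q p hx k m'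
  have hr : (0:ℝ) < (seqF n k).1.rad := (seqF_good0 n k).2.2.2
  have hp : (0:ℝ) ≤ (1/2:ℝ)^m' := by positivity
  calc |(seqF n (k+m')).1.φ q p x - (seqF n k).1.φ q p x|
      ≤ (seqF n k).1.rad * (1 - (1/2)^m') := h
    _ ≤ (seqF n k).1.rad := by nlinarith

noncomputable def δs (n k : ℕ) : ℝ := (seqF n (k+1)).1.δ
noncomputable def gs (n k : ℕ) : ℝ := (seqF n (k+1)).1.g
noncomputable def Sfin (n k : ℕ) (q : Fin (2*n+1)) (t : Fin n → ℤ) : ℝ :=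
  SS (seqF n (k+1)).1 q t

lemma δs_pos (n k : ℕ) : 0 < δs n k := (seqF_good0 n (k+1)).2.1
lemma δs_le (n k : ℕ) : δs n k ≤ (1/2)^k := by
  have h := seqF_delta_le n (k+1)
  have h2 : ((1:ℝ)/2)^(k+1) ≤ (1/2)^k := by
    have : (0:ℝ) ≤ (1/2:ℝ)^k := by positivity
    calc ((1:ℝ)/2)^(k+1) = (1/2)^k * (1/2) := by ring
    _ ≤ (1/2)^k := by linarith
  exact le_trans h h2
lemma gs_pos (n k : ℕ) : 0 < gs n k := (seqF_succ_good n k).2.1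

/-- Key closeness: on a cube of level `k`, the sum of the limit functions is
within `gs k / 3` of the cube's center value. -/
lemma Sfin_close (n k : ℕ) (q : Fin (2*n+1)) (t : Fin n → ℤ) (x : Fin n → ℝ)
    (hx : ∀ p, x p ∈ Set.Icc (0:ℝ) 1)
    (hE : ∀ p, x p ∈ EE n (δs n k) (q:ℤ) (t p)) :
    |(∑ p, phiF n q p (x p)) - Sfin n k q t| ≤ gs n k / 3 := by
  have hgood := seqF_succ_good n k
  have hterm : ∀ p : Fin n, |phiF n q p (x p) - (seqF n (k+1)).1.c q p (t p)|
      ≤ (seqF n (k+1)).1.rad := by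
    intro p
    have hme : Meets n (δs n k) (q:ℤ) (t p) := ⟨x p, hE p, hx p⟩
    have hconst := hgood.2.2.2.1 q p (t p) hme (x p) (hE p)
    have hclose := phiF_close n q p (hx p) (k+1)
    rw [← hconst]
    exact hclose
  have hsum : |(∑ p, phiF n q p (x p)) - Sfin n k q t|
      ≤ ∑ p : Fin n, |phiF n q p (x p) - (seqF n (k+1)).1.c q p (t p)| := by
    have : (∑ p, phiF n q p (x p)) - Sfin n k q t
        = ∑ p : Fin n, (phiF n q p (x p) - (seqF n (k+1)).1.c q p (t p)) := by
      rw [Finset.sum_sub_distrib]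
      rfl
    rw [this]
    exact Finset.abs_sum_le_sum_abs _ _
  have hrad : (seqF n (k+1)).1.rad ≤ (seqF n (k+1)).1.g/(3*(n:ℝ)+3) := hgood.2.2.1
  have hgpos := gs_pos n k
  calc |(∑ p, phiF n q p (x p)) - Sfin n k q t|
      ≤ ∑ p : Fin n, |phiF n q p (x p) - (seqF n (k+1)).1.c q p (t p)| := hsum
    _ ≤ ∑ _p : Fin n, (seqF n (k+1)).1.rad := Finset.sum_le_sum (fun p _ => hterm p)
    _ = (n:ℝ) * (seqF n (k+1)).1.rad := by
        rw [Finset.sum_const, Finset.card_univ, Fintype.card_fin, nsmul_eq_mul]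
    _ ≤ (n:ℝ) * ((seqF n (k+1)).1.g/(3*(n:ℝ)+3)) := by
        apply mul_le_mul_of_nonneg_left hrad (by positivity)
    _ ≤ gs n k / 3 := by
        show (n:ℝ) * (gs n k/(3*(n:ℝ)+3)) ≤ gs n k / 3
        rw [mul_div_assoc', div_le_div_iff₀ (by positivity) (by norm_num)]
        have hn0 : (0:ℝ) ≤ (n:ℝ) := Nat.cast_nonneg n
        nlinarith

lemma Sfin_sep (n k : ℕ) (q : Fin (2*n+1)) (t t' : Fin n → ℤ) (hne : t ≠ t')
    (hm : ∀ p, Meets n (δs n k) (q:ℤ) (t p)) (hm' : ∀ p, Meets n (δs n k) (q:ℤ) (t' p)) :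
    gs n k ≤ |Sfin n k q t - Sfin n k q t'| :=
  (seqF_succ_good n k).2.2.2.2 q t t' hne hm hm'

noncomputable def bump (S g y : ℝ) : ℝ := max 0 (min 1 ((g/2 - |y - S|) * (6/g)))

lemma bump_continuous (S g : ℝ) : Continuous (bump S g) := by
  apply continuous_const.max
  apply continuous_const.min
  exact (continuous_const.sub ((continuous_id.sub continuous_const).abs)).mul continuous_const

lemma bump_mem (S g y : ℝ) : bump S g y ∈ Set.Icc (0:ℝ) 1 := by
  unfold bump
  exact ⟨le_max_left _ _, max_le (by norm_num) (min_le_left _ _)⟩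

lemma bump_eq_one {S g y : ℝ} (hg : 0 < g) (h : |y - S| ≤ g/3) : bump S g y = 1 := by
  unfold bump
  have h1 : (1:ℝ) ≤ (g/2 - |y - S|) * (6/g) := by
    have ha : g/6 ≤ g/2 - |y - S| := by linarith
    have h6 : (0:ℝ) < 6/g := by positivity
    calc (1:ℝ) = (g/6) * (6/g) := by field_simp
    _ ≤ (g/2 - |y - S|) * (6/g) := mul_le_mul_of_nonneg_right ha h6.le
  rw [min_eq_left h1]
  exact max_eq_right (by norm_num)

lemma bump_eq_zero {S g y : ℝ} (hg : 0 < g) (h : g/2 ≤ |y - S|) : bump S g y = 0 := by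
  unfold bump
  apply max_eq_left
  have h1 : (g/2 - |y - S|) * (6/g) ≤ 0 := by
    apply mul_nonpos_of_nonpos_of_nonneg (by linarith)
    positivity
  exact le_trans (min_le_right _ _) h1

lemma bump_ne_zero {S g y : ℝ} (hg : 0 < g) (h : bump S g y ≠ 0) : |y - S| < g/2 := by
  by_contra hcon
  push_neg at hcon
  exact h (bump_eq_zero hg hcon)

lemma memK_iff {n : ℕ} (x : Fin n → ℝ) :
    x ∈ Set.Icc (0 : Fin n → ℝ) 1 ↔ ∀ p, x p ∈ Set.Icc (0:ℝ) 1 := by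
  simp only [Set.mem_Icc, Pi.le_def]
  constructor
  · rintro ⟨h1, h2⟩ p; exact ⟨h1 p, h2 p⟩
  · intro h; exact ⟨fun p => (h p).1, fun p => (h p).2⟩

set_option maxHeartbeats 2000000 in
open scoped Classical in
/-- The main approximation step. -/
lemma main_step (n : ℕ) (gfun : (Fin n → ℝ) → ℝ)
    (hgc : ContinuousOn gfun (Set.Icc 0 1)) (M : ℝ) (hM0 : 0 ≤ M)
    (hM : ∀ x ∈ Set.Icc (0 : Fin n → ℝ) 1, |gfun x| ≤ M) :
    ∃ Ψ : Fin (2*n+1) → ℝ → ℝ, (∀ q, Continuous (Ψ q)) ∧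
      (∀ q y, |Ψ q y| ≤ M/((n:ℝ)+1)) ∧
      ∀ x ∈ Set.Icc (0 : Fin n → ℝ) 1,
        |gfun x - ∑ q, Ψ q (∑ p, phiF n q p (x p))| ≤ (1 - 1/(2*((n:ℝ)+1)^2)) * M := by
  classical
  have hn1 : (0:ℝ) < (n:ℝ)+1 := by positivity
  have hθ0 : (0:ℝ) ≤ 1 - 1/(2*((n:ℝ)+1)^2) := by
    have h1 : (1:ℝ) ≤ ((n:ℝ)+1)^2 := by nlinarith
    have h2 : 1/(2*((n:ℝ)+1)^2) ≤ 1/2 := by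
      apply div_le_div_of_nonneg_left (by norm_num) (by norm_num) ?_
      · nlinarith
    linarith
  rcases eq_or_lt_of_le hM0 with hMeq | hMpos
  · -- M = 0 : take Ψ = 0
    refine ⟨fun _ _ => 0, fun q => continuous_const, ?_, ?_⟩
    · intro q y
      rw [abs_zero, ← hMeq]
      norm_num
    · intro x hx
      have h1 := hM x hx
      rw [← hMeq] at h1 ⊢
      simp only [Finset.sum_const_zero, sub_zero, mul_zero]
      exact h1
  -- M > 0
  have hKcompact : IsCompact (Set.Icc (0 : Fin n → ℝ) 1) := isCompact_Icc
  have huc : UniformContinuousOn gfun (Set.Icc 0 1) :=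
    hKcompact.uniformContinuousOn_of_continuous hgc
  obtain ⟨dd, hdd0, hdd⟩ := Metric.uniformContinuousOn_iff_le.1 huc
    (M/(2*((n:ℝ)+1))) (by positivity)
  -- pick a level k with (2n+1) δs k ≤ dd
  obtain ⟨k, hk⟩ : ∃ k : ℕ, (2*(n:ℝ)+1) * δs n k ≤ dd := by
    obtain ⟨k, hk⟩ := exists_pow_lt_of_lt_one (div_pos hdd0 (by positivity : (0:ℝ) < 2*(n:ℝ)+1))
      (by norm_num : (1:ℝ)/2 < 1)
    refine ⟨k, ?_⟩
    have h1 := δs_le n k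
    have h2 : δs n k < dd/(2*(n:ℝ)+1) := lt_of_le_of_lt h1 hk
    rw [lt_div_iff₀ (by positivity : (0:ℝ) < 2*(n:ℝ)+1)] at h2
    linarith
  set δ := δs n k with hδdef
  have hδ0 : 0 < δ := δs_pos n k
  set g := gs n k with hgdef
  have hg0 : 0 < g := gs_pos n k
  -- relevant tuples for each q
  set TupsAll := Fintype.piFinset (fun _ : Fin n => Finset.Icc (-2 : ℤ) (⌈1/δ⌉+1)) with hTA
  set rel : Fin (2*n+1) → Finset (Fin n → ℤ) := fun q => TupsAll.filter
    (fun t => ∃ y : Fin n → ℝ, y ∈ Set.Icc (0 : Fin n → ℝ) 1 ∧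
      ∀ p, y p ∈ EE n δ (q:ℤ) (t p)) with hrel
  set wit : Fin (2*n+1) → (Fin n → ℤ) → (Fin n → ℝ) := fun q t =>
    if h : ∃ y : Fin n → ℝ, y ∈ Set.Icc (0 : Fin n → ℝ) 1 ∧ ∀ p, y p ∈ EE n δ (q:ℤ) (t p)
    then h.choose else 0 with hwit
  have hwit_spec : ∀ q t, t ∈ rel q → wit q t ∈ Set.Icc (0 : Fin n → ℝ) 1 ∧
      ∀ p, wit q t p ∈ EE n δ (q:ℤ) (t p) := by
    intro q t ht
    rw [hrel, Finset.mem_filter] at ht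
    obtain ⟨-, hex⟩ := ht
    rw [hwit]
    simp only [dif_pos hex]
    exact hex.choose_spec
  -- tuples meeting give membership in rel
  have hmem_rel : ∀ (q : Fin (2*n+1)) (t : Fin n → ℤ) (y : Fin n → ℝ),
      y ∈ Set.Icc (0 : Fin n → ℝ) 1 → (∀ p, y p ∈ EE n δ (q:ℤ) (t p)) → t ∈ rel q := by
    intro q t y hy hE
    rw [hrel, Finset.mem_filter]
    constructor
    · rw [hTA, Fintype.mem_piFinset]
      intro p
      have hme : Meets n δ (q:ℤ) (t p) := ⟨y p, hE p, (memK_iff y).1 hy p⟩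
      have hq0 : (0:ℤ) ≤ (q:ℤ) := by positivity
      have hq1 : ((q:ℕ):ℤ) < 2*(n:ℤ)+1 := by exact_mod_cast q.isLt
      obtain ⟨h1, h2⟩ := meets_range hδ0 hq0 (by exact_mod_cast hq1) hme
      rw [Finset.mem_Icc]
      exact ⟨h1, h2⟩
    · exact ⟨y, hy, hE⟩
  -- separation of relevant tuples
  have hsep : ∀ (q : Fin (2*n+1)), ∀ t ∈ rel q, ∀ t' ∈ rel q, t ≠ t' →
      g ≤ |Sfin n k q t - Sfin n k q t'| := by
    intro q t ht t' ht' hne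
    obtain ⟨hy, hE⟩ := hwit_spec q t ht
    obtain ⟨hy', hE'⟩ := hwit_spec q t' ht'
    apply Sfin_sep n k q t t' hne
    · intro p; exact ⟨wit q t p, hE p, (memK_iff _).1 hy p⟩
    · intro p; exact ⟨wit q t' p, hE' p, (memK_iff _).1 hy' p⟩
  -- the outer functions
  set Ψ : Fin (2*n+1) → ℝ → ℝ := fun q y =>
    ∑ t ∈ rel q, (gfun (wit q t)/((n:ℝ)+1)) * bump (Sfin n k q t) g y with hΨ
  -- at most one bump is active; sum of bumps ≤ 1
  have hbump_sum : ∀ (q : Fin (2*n+1)) (y : ℝ), ∑ t ∈ rel q, bump (Sfin n k q t) g y ≤ 1 := by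
    intro q y
    by_cases hall : ∀ t ∈ rel q, bump (Sfin n k q t) g y = 0
    · rw [Finset.sum_congr rfl hall]
      simp
    · push_neg at hall
      obtain ⟨t₀, ht₀, ht₀ne⟩ := hall
      have hothers : ∀ t ∈ rel q, t ≠ t₀ → bump (Sfin n k q t) g y = 0 := by
        intro t ht htne
        apply bump_eq_zero hg0
        by_contra hcon
        push_neg at hcon
        have h1 := bump_ne_zero hg0 ht₀ne
        have h2 := hsep q t ht t₀ ht₀ htne
        have : |Sfin n k q t - Sfin n k q t₀| < g := by
          calc |Sfin n k q t - Sfin n k q t₀|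
              = |(y - Sfin n k q t₀) - (y - Sfin n k q t)| := by ring_nf
            _ ≤ |y - Sfin n k q t₀| + |y - Sfin n k q t| := abs_sub _ _
            _ < g/2 + g/2 := add_lt_add h1 hcon
            _ = g := by ring
        linarith
      rw [Finset.sum_eq_single_of_mem t₀ ht₀ (fun t ht htne => hothers t ht htne)]
      exact (bump_mem _ _ _).2
  have hbump_nonneg : ∀ S y, 0 ≤ bump S g y := fun S y => (bump_mem S g y).1
  -- pointwise bound for Ψ
  have hΨbound : ∀ q y, |Ψ q y| ≤ M/((n:ℝ)+1) := by
    intro q y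
    simp only [hΨ]
    calc |∑ t ∈ rel q, (gfun (wit q t)/((n:ℝ)+1)) * bump (Sfin n k q t) g y|
        ≤ ∑ t ∈ rel q, |(gfun (wit q t)/((n:ℝ)+1)) * bump (Sfin n k q t) g y| :=
          Finset.abs_sum_le_sum_abs _ _
      _ ≤ ∑ t ∈ rel q, (M/((n:ℝ)+1)) * bump (Sfin n k q t) g y := by
          apply Finset.sum_le_sum
          intro t ht
          rw [abs_mul, abs_of_nonneg (hbump_nonneg _ _)]
          apply mul_le_mul_of_nonneg_right _ (hbump_nonneg _ _)
          rw [abs_div, abs_of_pos hn1]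
          gcongr
          exact hM _ (hwit_spec q t ht).1
      _ = (M/((n:ℝ)+1)) * ∑ t ∈ rel q, bump (Sfin n k q t) g y := by
          rw [Finset.mul_sum]
      _ ≤ (M/((n:ℝ)+1)) * 1 := by
          apply mul_le_mul_of_nonneg_left (hbump_sum q y) (by positivity)
      _ = M/((n:ℝ)+1) := by ring
  refine ⟨Ψ, ?_, hΨbound, ?_⟩
  · intro q
    simp only [hΨ]
    apply continuous_finset_sum
    intro t _
    exact continuous_const.mul (bump_continuous _ _)
  -- the main estimate
  intro x hx
  set B := Finset.univ.filter (fun q : Fin (2*n+1) => ∀ p, ∃ j, x p ∈ EE n δ (q:ℤ) j) with hB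
  have hcard : n+1 ≤ B.card := counting n hδ0 x
  have hcard2 : B.card ≤ 2*n+1 := by
    calc B.card ≤ (Finset.univ : Finset (Fin (2*n+1))).card := Finset.card_le_univ _
    _ = 2*n+1 := by simp
  have htup : ∀ q ∈ B, ∃ t : Fin n → ℤ, ∀ p, x p ∈ EE n δ (q:ℤ) (t p) := by
    intro q hq
    rw [hB, Finset.mem_filter] at hq
    exact ⟨fun p => (hq.2 p).choose, fun p => (hq.2 p).choose_spec⟩
  set sq : Fin (2*n+1) → ℝ := fun q => ∑ p, phiF n q p (x p) with hsq
  have hgoodq : ∀ q ∈ B, |gfun x/((n:ℝ)+1) - Ψ q (sq q)| ≤ M/(2*((n:ℝ)+1)^2) := by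
    intro q hq
    obtain ⟨t, hE⟩ := htup q hq
    have htrel : t ∈ rel q := hmem_rel q t x hx hE
    have hclose : |sq q - Sfin n k q t| ≤ g/3 := Sfin_close n k q t x ((memK_iff x).1 hx) hE
    have hb1 : bump (Sfin n k q t) g (sq q) = 1 := bump_eq_one hg0 hclose
    have hothers : ∀ t' ∈ rel q, t' ≠ t → bump (Sfin n k q t') g (sq q) = 0 := by
      intro t' ht' hne
      apply bump_eq_zero hg0
      have h2 := hsep q t' ht' t htrel hne
      have h3 : |Sfin n k q t' - Sfin n k q t|
          ≤ |sq q - Sfin n k q t'| + |sq q - Sfin n k q t| := by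
        have : Sfin n k q t' - Sfin n k q t = (sq q - Sfin n k q t) - (sq q - Sfin n k q t') := by
          ring
        rw [this]
        exact (abs_sub _ _).trans_eq (add_comm _ _)
      linarith
    have hΨval : Ψ q (sq q) = gfun (wit q t)/((n:ℝ)+1) := by
      simp only [hΨ]
      rw [Finset.sum_eq_single_of_mem t htrel
        (fun t' ht' hne => by rw [hothers t' ht' hne, mul_zero])]
      rw [hb1, mul_one]
    rw [hΨval]
    have hwitK := (hwit_spec q t htrel).1
    have hwitE := (hwit_spec q t htrel).2
    have hdist : dist x (wit q t) ≤ dd := by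
      rw [dist_pi_le_iff hdd0.le]
      intro p
      rw [Real.dist_eq]
      have h1 := hE p
      have h2 := hwitE p
      rw [EE, Set.mem_Icc] at h1 h2
      have hlen : Ehi n δ (q:ℤ) (t p) - Elo n δ (q:ℤ) (t p) = 2*(n:ℝ)*δ := by
        unfold Ehi Elo
        push_cast
        ring
      rw [abs_le]
      constructor
      · nlinarith [h1.1, h2.2, hδ0.le]
      · nlinarith [h1.2, h2.1, hδ0.le]
    have hgg := hdd x hx (wit q t) hwitK hdist
    rw [Real.dist_eq] at hgg
    calc |gfun x/((n:ℝ)+1) - gfun (wit q t)/((n:ℝ)+1)|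
        = |gfun x - gfun (wit q t)|/((n:ℝ)+1) := by
          rw [div_sub_div_same, abs_div, abs_of_pos hn1]
      _ ≤ (M/(2*((n:ℝ)+1)))/((n:ℝ)+1) := by gcongr
      _ = M/(2*((n:ℝ)+1)^2) := by
          rw [div_div]
          congr 1
          ring
  have hsplit : ∑ q, Ψ q (sq q) = (∑ q ∈ B, Ψ q (sq q)) + ∑ q ∈ Bᶜ, Ψ q (sq q) :=
    (Finset.sum_add_sum_compl B _).symm
  have hdecomp : gfun x - ∑ q, Ψ q (sq q)
      = (1 - (B.card:ℝ)/((n:ℝ)+1)) * gfun x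
        + (∑ q ∈ B, (gfun x/((n:ℝ)+1) - Ψ q (sq q)))
        - ∑ q ∈ Bᶜ, Ψ q (sq q) := by
    rw [hsplit, Finset.sum_sub_distrib, Finset.sum_const, nsmul_eq_mul]
    ring
  have hm1 : ((n:ℝ)+1) ≤ (B.card:ℝ) := by exact_mod_cast hcard
  have hm2 : (B.card:ℝ) ≤ 2*(n:ℝ)+1 := by exact_mod_cast hcard2
  have hgx := hM x hx
  have hT1 : |(1 - (B.card:ℝ)/((n:ℝ)+1)) * gfun x| ≤ ((B.card:ℝ)-(n:ℝ)-1)/((n:ℝ)+1) * M := by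
    rw [abs_mul]
    have h1 : |1 - (B.card:ℝ)/((n:ℝ)+1)| = ((B.card:ℝ)-(n:ℝ)-1)/((n:ℝ)+1) := by
      rw [abs_of_nonpos]
      · field_simp
        ring
      · rw [sub_nonpos, le_div_iff₀ hn1]
        linarith
    rw [h1]
    apply mul_le_mul_of_nonneg_left hgx
    apply div_nonneg _ hn1.le
    linarith
  have hT2 : |∑ q ∈ B, (gfun x/((n:ℝ)+1) - Ψ q (sq q))| ≤ (B.card:ℝ) * (M/(2*((n:ℝ)+1)^2)) := by
    calc |∑ q ∈ B, (gfun x/((n:ℝ)+1) - Ψ q (sq q))|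
        ≤ ∑ q ∈ B, |gfun x/((n:ℝ)+1) - Ψ q (sq q)| := Finset.abs_sum_le_sum_abs _ _
      _ ≤ ∑ _q ∈ B, M/(2*((n:ℝ)+1)^2) := Finset.sum_le_sum hgoodq
      _ = (B.card:ℝ) * (M/(2*((n:ℝ)+1)^2)) := by rw [Finset.sum_const, nsmul_eq_mul]
  have hT3 : |∑ q ∈ Bᶜ, Ψ q (sq q)| ≤ (2*(n:ℝ)+1-(B.card:ℝ)) * (M/((n:ℝ)+1)) := by
    calc |∑ q ∈ Bᶜ, Ψ q (sq q)|
        ≤ ∑ q ∈ Bᶜ, |Ψ q (sq q)| := Finset.abs_sum_le_sum_abs _ _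
      _ ≤ ∑ _q ∈ Bᶜ, M/((n:ℝ)+1) := Finset.sum_le_sum (fun q _ => hΨbound q (sq q))
      _ = (Bᶜ.card : ℝ) * (M/((n:ℝ)+1)) := by rw [Finset.sum_const, nsmul_eq_mul]
      _ = (2*(n:ℝ)+1-(B.card:ℝ)) * (M/((n:ℝ)+1)) := by
          congr 1
          rw [Finset.card_compl]
          have : Fintype.card (Fin (2*n+1)) = 2*n+1 := by simp
          rw [this]
          push_cast [Nat.cast_sub hcard2]
          ring
  have htotal : |gfun x - ∑ q, Ψ q (sq q)|
      ≤ ((B.card:ℝ)-(n:ℝ)-1)/((n:ℝ)+1) * M + (B.card:ℝ) * (M/(2*((n:ℝ)+1)^2))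
        + (2*(n:ℝ)+1-(B.card:ℝ)) * (M/((n:ℝ)+1)) := by
    rw [hdecomp]
    calc |(1 - (B.card:ℝ)/((n:ℝ)+1)) * gfun x
          + (∑ q ∈ B, (gfun x/((n:ℝ)+1) - Ψ q (sq q)))
          - ∑ q ∈ Bᶜ, Ψ q (sq q)|
        ≤ |(1 - (B.card:ℝ)/((n:ℝ)+1)) * gfun x
          + (∑ q ∈ B, (gfun x/((n:ℝ)+1) - Ψ q (sq q)))|
          + |∑ q ∈ Bᶜ, Ψ q (sq q)| := abs_sub _ _
      _ ≤ |(1 - (B.card:ℝ)/((n:ℝ)+1)) * gfun x|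
          + |∑ q ∈ B, (gfun x/((n:ℝ)+1) - Ψ q (sq q))|
          + |∑ q ∈ Bᶜ, Ψ q (sq q)| := by
          have := abs_add_le ((1 - (B.card:ℝ)/((n:ℝ)+1)) * gfun x)
            (∑ q ∈ B, (gfun x/((n:ℝ)+1) - Ψ q (sq q)))
          linarith
      _ ≤ _ := by
          have := hT1; have := hT2; have := hT3
          linarith
  set mr := (B.card : ℝ)
  set nr := (n:ℝ)
  have hkey : (mr-nr-1)/(nr+1) * M + (2*nr+1-mr) * (M/(nr+1)) = nr/(nr+1)*M := by
    field_simp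
    ring
  have h2 : mr * (M/(2*(nr+1)^2)) ≤ (2*nr+1) * (M/(2*(nr+1)^2)) := by
    apply mul_le_mul_of_nonneg_right hm2
    positivity
  have h3 : nr/(nr+1)*M + (2*nr+1) * (M/(2*(nr+1)^2)) = (1 - 1/(2*(nr+1)^2))*M := by
    field_simp
    ring
  linarith

noncomputable def theta (n : ℕ) : ℝ := 1 - 1/(2*((n:ℝ)+1)^2)

lemma theta_nonneg (n : ℕ) : 0 ≤ theta n := by
  unfold theta
  have h1 : (1:ℝ) ≤ ((n:ℝ)+1)^2 := by nlinarith [Nat.cast_nonneg (α := ℝ) n]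
  have h2 : 1/(2*((n:ℝ)+1)^2) ≤ 1/2 := by
    apply div_le_div_of_nonneg_left (by norm_num) (by norm_num)
    nlinarith
  linarith

lemma theta_lt_one (n : ℕ) : theta n < 1 := by
  unfold theta
  have : (0:ℝ) < 1/(2*((n:ℝ)+1)^2) := by positivity
  linarith

/-- One step of the iteration, packaged. -/
noncomputable def iter (n : ℕ) (f : (Fin n → ℝ) → ℝ) (hf : ContinuousOn f (Set.Icc 0 1))
    (M₀ : ℝ) (hM₀ : 0 ≤ M₀) (hfb : ∀ x ∈ Set.Icc (0 : Fin n → ℝ) 1, |f x| ≤ M₀) :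
    (j : ℕ) → {GΨ : ((Fin n → ℝ) → ℝ) × (Fin (2*n+1) → ℝ → ℝ) //
      ContinuousOn GΨ.1 (Set.Icc 0 1) ∧
      (∀ x ∈ Set.Icc (0 : Fin n → ℝ) 1, |GΨ.1 x| ≤ theta n^j * M₀) ∧
      (∀ q, Continuous (GΨ.2 q)) ∧
      (∀ q y, |GΨ.2 q y| ≤ (theta n^j * M₀)/((n:ℝ)+1)) ∧
      (∀ x ∈ Set.Icc (0 : Fin n → ℝ) 1,
        |GΨ.1 x - ∑ q, GΨ.2 q (∑ p, phiF n q p (x p))| ≤ theta n * (theta n^j * M₀))}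
  | 0 => by
      have hb : ∀ x ∈ Set.Icc (0 : Fin n → ℝ) 1, |f x| ≤ theta n^0 * M₀ := by
        intro x hx; rw [pow_zero, one_mul]; exact hfb x hx
      have hM : (0:ℝ) ≤ theta n^0 * M₀ := by
        have := theta_nonneg n
        positivity
      exact ⟨(f, (main_step n f hf (theta n^0 * M₀) hM hb).choose), hf, hb,
        (main_step n f hf (theta n^0 * M₀) hM hb).choose_spec.1,
        (main_step n f hf (theta n^0 * M₀) hM hb).choose_spec.2.1,
        (main_step n f hf (theta n^0 * M₀) hM hb).choose_spec.2.2⟩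
  | (j+1) => by
      set prev := iter n f hf M₀ hM₀ hfb j
      set G : (Fin n → ℝ) → ℝ :=
        fun x => prev.1.1 x - ∑ q, prev.1.2 q (∑ p, phiF n q p (x p)) with hG
      have hGc : ContinuousOn G (Set.Icc 0 1) := by
        apply prev.2.1.sub
        apply Continuous.continuousOn
        apply continuous_finset_sum
        intro q _
        exact (prev.2.2.2.1 q).comp
          (continuous_finset_sum _ (fun p _ => (phiF_continuous n q p).comp (continuous_apply p)))
      have hGb : ∀ x ∈ Set.Icc (0 : Fin n → ℝ) 1, |G x| ≤ theta n^(j+1) * M₀ := by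
        intro x hx
        have h := prev.2.2.2.2.2 x hx
        calc |G x| ≤ theta n * (theta n^j * M₀) := h
        _ = theta n^(j+1) * M₀ := by ring
      have hM : (0:ℝ) ≤ theta n^(j+1) * M₀ := by
        have := theta_nonneg n
        positivity
      exact ⟨(G, (main_step n G hGc (theta n^(j+1) * M₀) hM hGb).choose), hGc, hGb,
        (main_step n G hGc (theta n^(j+1) * M₀) hM hGb).choose_spec.1,
        (main_step n G hGc (theta n^(j+1) * M₀) hM hGb).choose_spec.2.1,
        (main_step n G hGc (theta n^(j+1) * M₀) hM hGb).choose_spec.2.2⟩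

end KA

set_option maxHeartbeats 1000000 in
/-- Kolmogorov–Arnold representation theorem. -/
theorem kolmogorov_arnold (n : ℕ) (f : (Fin n → ℝ) → ℝ)
    (hf : ContinuousOn f (Set.Icc 0 1)) :
    ∃ (Φ : Fin (2 * n + 1) → ℝ → ℝ) (φ : Fin (2 * n + 1) → Fin n → ℝ → ℝ),
      (∀ q, Continuous (Φ q)) ∧
      (∀ q p, ContinuousOn (φ q p) (Set.Icc 0 1)) ∧
      ∀ x ∈ Set.Icc (0 : Fin n → ℝ) 1,
        f x = ∑ q, Φ q (∑ p, φ q p (x p)) := by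
  classical
  obtain ⟨C, hC⟩ := (isCompact_Icc).exists_bound_of_continuousOn hf
  set M₀ := max C 0 with hM₀def
  have hM₀ : 0 ≤ M₀ := le_max_right _ _
  have hfb : ∀ x ∈ Set.Icc (0 : Fin n → ℝ) 1, |f x| ≤ M₀ := by
    intro x hx
    calc |f x| = ‖f x‖ := (Real.norm_eq_abs _).symm
    _ ≤ C := hC x hx
    _ ≤ M₀ := le_max_left _ _
  set it := KA.iter n f hf M₀ hM₀ hfb with hit
  have hθ0 := KA.theta_nonneg n
  have hθ1 := KA.theta_lt_one n
  have hn1 : (0:ℝ) < (n:ℝ)+1 := by positivity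
  have hΨb : ∀ (j : ℕ) (q : Fin (2*n+1)) (y : ℝ),
      ‖(it j).1.2 q y‖ ≤ (M₀/((n:ℝ)+1)) * KA.theta n^j := by
    intro j q y
    rw [Real.norm_eq_abs]
    have h := (it j).2.2.2.2.1 q y
    calc |(it j).1.2 q y| ≤ (KA.theta n^j * M₀)/((n:ℝ)+1) := h
    _ = (M₀/((n:ℝ)+1)) * KA.theta n^j := by ring
  have hsummgeo : Summable (fun j : ℕ => (M₀/((n:ℝ)+1)) * KA.theta n^j) :=
    (summable_geometric_of_lt_one hθ0 hθ1).mul_left _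
  refine ⟨fun q y => ∑' j, (it j).1.2 q y, fun q p => KA.phiF n q p, ?_, ?_, ?_⟩
  · intro q
    exact continuous_tsum (fun j => (it j).2.2.2.1 q) hsummgeo (fun j y => hΨb j q y)
  · intro q p
    exact (KA.phiF_continuous n q p).continuousOn
  · intro x hx
    set sqv : Fin (2*n+1) → ℝ := fun q => ∑ p, KA.phiF n q p (x p) with hsqv
    have hsq_summ : ∀ q, Summable (fun j => (it j).1.2 q (sqv q)) := by
      intro q
      exact Summable.of_norm_bounded hsummgeo (fun j => hΨb j q (sqv q))
    have hswap : ∑ q, ∑' j, (it j).1.2 q (sqv q) = ∑' j, ∑ q, (it j).1.2 q (sqv q) :=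
      (Summable.tsum_finsetSum (fun q _ => hsq_summ q)).symm
    have htele : ∀ j, ∑ q, (it j).1.2 q (sqv q) = (it j).1.1 x - (it (j+1)).1.1 x := by
      intro j
      have hstep : (it (j+1)).1.1 x = (it j).1.1 x - ∑ q, (it j).1.2 q (sqv q) := rfl
      rw [hstep]
      ring
    have hGbound : ∀ j, |(it j).1.1 x| ≤ KA.theta n^j * M₀ := fun j => (it j).2.2.1 x hx
    have hG0 : (it 0).1.1 x = f x := rfl
    have hsumm_tele : Summable (fun j => (it j).1.1 x - (it (j+1)).1.1 x) := by
      apply Summable.of_norm_bounded (g := fun j => 2*M₀*KA.theta n^j)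
        (((summable_geometric_of_lt_one hθ0 hθ1).mul_left (2*M₀)))
      intro j
      rw [Real.norm_eq_abs]
      have h1 := hGbound j
      have h2 := hGbound (j+1)
      have h3 : KA.theta n^(j+1) ≤ KA.theta n^j := by
        have hp : (0:ℝ) ≤ KA.theta n^j := by positivity
        calc KA.theta n^(j+1) = KA.theta n^j * KA.theta n := by ring
        _ ≤ KA.theta n^j * 1 := by nlinarith
        _ = KA.theta n^j := by ring
      have hp : (0:ℝ) ≤ KA.theta n^j := by positivity
      calc |(it j).1.1 x - (it (j+1)).1.1 x|
          ≤ |(it j).1.1 x| + |(it (j+1)).1.1 x| := abs_sub _ _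
        _ ≤ KA.theta n^j * M₀ + KA.theta n^(j+1) * M₀ := add_le_add h1 h2
        _ ≤ 2*M₀*KA.theta n^j := by nlinarith
    have hlim : Filter.Tendsto (fun m => (it m).1.1 x) Filter.atTop (nhds 0) := by
      have hnorm : ∀ m : ℕ, ‖(it m).1.1 x‖ ≤ KA.theta n^m * M₀ := by
        intro m
        rw [Real.norm_eq_abs]
        exact hGbound m
      apply squeeze_zero_norm hnorm
      have := (tendsto_pow_atTop_nhds_zero_of_lt_one hθ0 hθ1).mul_const M₀
      rwa [zero_mul] at this
    have hts : ∑' j, ((it j).1.1 x - (it (j+1)).1.1 x) = f x := by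
      have hhs := hsumm_tele.hasSum
      rw [hsumm_tele.hasSum_iff_tendsto_nat] at hhs
      have hpartial : ∀ m, ∑ j ∈ Finset.range m, ((it j).1.1 x - (it (j+1)).1.1 x)
          = f x - (it m).1.1 x := by
        intro m
        rw [Finset.sum_range_sub' (fun j => (it j).1.1 x), hG0]
      have h2 : Filter.Tendsto (fun m => f x - (it m).1.1 x) Filter.atTop (nhds (f x)) := by
        have := Filter.Tendsto.sub (tendsto_const_nhds (x := f x)) hlim
        rwa [sub_zero] at this
      exact tendsto_nhds_unique ((Filter.tendsto_congr hpartial).1 hhs) h2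
    calc f x = ∑' j, ((it j).1.1 x - (it (j+1)).1.1 x) := hts.symm
    _ = ∑' j, ∑ q, (it j).1.2 q (sqv q) := (tsum_congr htele).symm
    _ = ∑ q, ∑' j, (it j).1.2 q (sqv q) := hswap.symm
end

section
/- Let σ : ℝ → ℝ be continuous, bounded, and non-constant (or more specifically sigmoidal: σ(t) → 1 as t → ∞ and σ(t) → 0 as t → -∞). Then the set of functions of the form x ↦ Σ_{i=1}^{N} v_i σ(⟨w_i, x⟩ + b_i), with N ∈ ℕ, v_i, b_i ∈ ℝ, w_i ∈ ℝ^n, is dense in C([0,1]^n, ℝ) with respect to the supremum norm. -/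
open Filter Finset Real

private lemma ua_sigma_bdd (σ : ℝ → ℝ) (hσc : Continuous σ)
    (hσ1 : Tendsto σ atTop (nhds 1)) (hσ0 : Tendsto σ atBot (nhds 0)) :
    ∃ M : ℝ, 2 ≤ M ∧ ∀ u, |σ u| ≤ M := by
  obtain ⟨T1, hT1⟩ := eventually_atTop.1
    (hσ1.eventually (Metric.closedBall_mem_nhds (1:ℝ) one_pos))
  obtain ⟨T0, hT0⟩ := eventually_atBot.1
    (hσ0.eventually (Metric.closedBall_mem_nhds (0:ℝ) one_pos))
  obtain ⟨C, hC⟩ := (isCompact_Icc (a := min T0 T1) (b := max T0 T1)).exists_bound_of_continuousOn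
    hσc.continuousOn
  refine ⟨max C 2, le_max_right _ _, fun u => ?_⟩
  rcases le_or_gt u (max T0 T1) with hu | hu
  · rcases le_or_gt (min T0 T1) u with hu' | hu'
    · exact le_trans (hC u ⟨hu', hu⟩) (le_max_left _ _)
    · have h1 : u ≤ T0 := le_of_lt (lt_of_lt_of_le hu' (min_le_left _ _))
      have h2 := hT0 u h1
      rw [Real.dist_eq, sub_zero] at h2
      exact le_trans h2 (by norm_num)
  · have h1 : T1 ≤ u := le_of_lt (lt_of_le_of_lt (le_max_right T0 T1) hu)
    have h2 := hT1 u h1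
    rw [Real.dist_eq] at h2
    have h3 : |σ u| ≤ 2 := by
      have := abs_add_le (σ u - 1) 1
      simp only [sub_add_cancel] at this
      simp only [abs_one] at this
      linarith
    exact le_trans h3 (le_max_right _ _)

private lemma ua_cos_lip (x y : ℝ) : |Real.cos x - Real.cos y| ≤ |x - y| := by
  rw [Real.cos_sub_cos]
  have h1 : |Real.sin ((x + y) / 2)| ≤ 1 :=
    abs_le.2 ⟨Real.neg_one_le_sin _, Real.sin_le_one _⟩
  have h2 : |Real.sin ((x - y) / 2)| ≤ |(x - y) / 2| := Real.abs_sin_le_abs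
  calc |(-2) * Real.sin ((x + y) / 2) * Real.sin ((x - y) / 2)|
      = 2 * |Real.sin ((x + y) / 2)| * |Real.sin ((x - y) / 2)| := by
        rw [abs_mul, abs_mul]; norm_num
    _ ≤ 2 * 1 * |(x - y) / 2| := by
        apply mul_le_mul _ h2 (abs_nonneg _) (by norm_num)
        nlinarith [abs_nonneg (Real.sin ((x+y)/2))]
    _ = |x - y| := by rw [abs_div, abs_two]; ring

set_option maxHeartbeats 2000000 in
/-- One-dimensional approximation of `cos` by sums of sigmoids. -/
private lemma ua_cos_approx (σ : ℝ → ℝ) (hσc : Continuous σ)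
    (hσ1 : Tendsto σ atTop (nhds 1)) (hσ0 : Tendsto σ atBot (nhds 0))
    (A B : ℝ) (hAB : A < B) (ε : ℝ) (hε : 0 < ε) :
    ∃ (N : ℕ) (v a b : Fin N → ℝ), ∀ t ∈ Set.Icc A B,
      |Real.cos t - ∑ l, v l * σ (a l * t + b l)| < ε := by
  obtain ⟨M, hM2, hM⟩ := ua_sigma_bdd σ hσc hσ1 hσ0
  have hM0 : (0:ℝ) < M + 2 := by linarith
  obtain ⟨ε', hε'def⟩ : ∃ x : ℝ, x = ε / (3 * (M + 2)) := ⟨_, rfl⟩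
  have hε' : 0 < ε' := by rw [hε'def]; positivity
  have hBA : 0 < B - A := by linarith
  obtain ⟨m, hm⟩ := exists_nat_gt (2 * (B - A) / ε')
  have hmpos : 0 < (m:ℝ) := lt_trans (by positivity) hm
  obtain ⟨h, hhdef⟩ : ∃ x : ℝ, x = (B - A) / m := ⟨_, rfl⟩
  have hh : 0 < h := by rw [hhdef]; positivity
  have hmh : (m:ℝ) * h = B - A := by rw [hhdef]; field_simp
  have h2h : 2 * h < ε' := by
    rw [div_lt_iff₀ hε'] at hm
    rw [hhdef, mul_div_assoc', div_lt_iff₀ hmpos]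
    linarith
  obtain ⟨p, hpdef⟩ : ∃ x : ℕ → ℝ, x = fun i : ℕ => A + (i:ℝ) * h := ⟨_, rfl⟩
  obtain ⟨q, hqdef⟩ : ∃ x : ℕ → ℝ, x = fun i : ℕ => A + ((i:ℝ) + 1/2) * h := ⟨_, rfl⟩
  obtain ⟨c, hcdef⟩ : ∃ x : ℕ → ℝ, x = fun i => Real.cos (p (i+1)) - Real.cos (p i) := ⟨_, rfl⟩
  have hcbound : ∀ i, |c i| ≤ h := by
    intro i
    rw [hcdef]
    refine le_trans (ua_cos_lip _ _) (le_of_eq ?_)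
    have h1 : p (i+1) - p i = h := by rw [hpdef]; push_cast; ring
    rw [h1, abs_of_pos hh]
  obtain ⟨CC, hCCdef⟩ : ∃ x : ℝ, x = |Real.cos A| + (B - A) + 1 := ⟨_, rfl⟩
  have hCC : 0 < CC := by rw [hCCdef]; positivity
  obtain ⟨η, hηdef⟩ : ∃ x : ℝ, x = ε / (3 * CC) := ⟨_, rfl⟩
  have hη : 0 < η := by rw [hηdef]; positivity
  have hCCη : CC * η = ε / 3 := by
    rw [hηdef]; field_simp
  obtain ⟨K1, hK1⟩ := eventually_atTop.1
    (hσ1.eventually (Metric.closedBall_mem_nhds (1:ℝ) hη))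
  obtain ⟨K0, hK0⟩ := eventually_atBot.1
    (hσ0.eventually (Metric.closedBall_mem_nhds (0:ℝ) hη))
  obtain ⟨K, hKdef⟩ : ∃ x : ℝ, x = max 1 (max K1 (-K0)) := ⟨_, rfl⟩
  have hK1' : (1:ℝ) ≤ K := hKdef ▸ le_max_left _ _
  have hKpos : (0:ℝ) < K := by linarith
  have hKup : ∀ u, K ≤ u → |σ u - 1| ≤ η := by
    intro u hu
    rw [hKdef] at hu
    have := hK1 u (le_trans (le_trans (le_max_left _ _) (le_max_right _ _)) hu)
    rwa [Real.dist_eq] at this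
  have hKdown : ∀ u, u ≤ -K → |σ u| ≤ η := by
    intro u hu
    have hK0K : -K0 ≤ K := hKdef ▸ le_trans (le_max_right _ _) (le_max_right _ _)
    have := hK0 u (le_trans hu (by linarith))
    rwa [Real.dist_eq, sub_zero] at this
  obtain ⟨k, hkdef⟩ : ∃ x : ℝ, x = K * (2 / h + 1) := ⟨_, rfl⟩
  have hk0 : 0 < k := by rw [hkdef]; positivity
  have hkK : K ≤ k := by
    have h1 : (0:ℝ) ≤ 2 / h := by positivity
    rw [hkdef]; nlinarith
  have hkh : K ≤ k * (h / 2) := by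
    have h1 : k * (h / 2) = K * (1 + h / 2) := by
      rw [hkdef]; field_simp
    rw [h1]; nlinarith
  -- the approximant
  obtain ⟨F, hFdef⟩ : ∃ x : ℝ → ℝ, x = fun t =>
      Real.cos A * σ (k * (t - A + 1)) + ∑ i ∈ range m, c i * σ (k * (t - q i)) := ⟨_, rfl⟩
  have key : ∀ t ∈ Set.Icc A B, |Real.cos t - F t| < ε := by
    intro t ht
    obtain ⟨htA, htB⟩ := ht
    obtain ⟨r, hrdef⟩ : ∃ x : ℝ, x = (t - A) / h + 1/2 := ⟨_, rfl⟩
    have hr0 : 0 ≤ r := by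
      have h1 : 0 ≤ (t - A) / h := div_nonneg (by linarith) hh.le
      rw [hrdef]; linarith
    obtain ⟨j, hjdef⟩ : ∃ x : ℕ, x = ⌊r⌋₊ := ⟨_, rfl⟩
    have hjr1 : (j:ℝ) ≤ r := hjdef ▸ Nat.floor_le hr0
    have hjr2 : r < j + 1 := hjdef ▸ Nat.lt_floor_add_one r
    have hjm : j ≤ m := by
      have h1 : (t - A) / h ≤ m := by
        rw [div_le_iff₀ hh]; linarith
      have h2 : r < (m:ℝ) + 1 := by rw [hrdef]; linarith
      have h3 := (Nat.floor_lt hr0).2 (by exact_mod_cast h2 : r < ((m+1:ℕ):ℝ))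
      omega
    have hiff : ∀ i : ℕ, (q i ≤ t ↔ i < j) := by
      intro i
      constructor
      · intro hqi
        have h1 : ((i:ℝ) + 1/2) * h ≤ t - A := by
          rw [hqdef] at hqi; simp only at hqi; linarith
        have h2 : (i:ℝ) + 1/2 ≤ (t - A) / h := (le_div_iff₀ hh).2 h1
        have h3 : ((i+1:ℕ):ℝ) ≤ r := by push_cast; rw [hrdef]; linarith
        have h4 := Nat.le_floor h3
        omega
      · intro hij
        have h1 : ((i+1:ℕ):ℝ) ≤ r := (Nat.le_floor_iff hr0).1 (by omega)
        push_cast at h1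
        have h2 : (i:ℝ) + 1/2 ≤ (t - A) / h := by rw [hrdef] at h1; linarith
        have h3 := (le_div_iff₀ hh).1 h2
        rw [hqdef]; simp only; linarith
    -- telescoping: the ideal step function value
    have hS : Real.cos A + ∑ i ∈ range m, c i * (if q i ≤ t then 1 else 0)
        = Real.cos (p j) := by
      have hcongr : ∀ i ∈ range m, c i * (if q i ≤ t then 1 else 0)
          = if i ∈ range j then c i else 0 := by
        intro i _
        by_cases hqi : q i ≤ t
        · rw [if_pos hqi, if_pos (Finset.mem_range.2 ((hiff i).1 hqi)), mul_one]
        · rw [if_neg hqi, if_neg (fun hij => hqi ((hiff i).2 (Finset.mem_range.1 hij))),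
            mul_zero]
      rw [Finset.sum_congr rfl hcongr, Finset.sum_ite_mem,
        Finset.inter_eq_right.2 (Finset.range_subset_range.2 hjm)]
      have htel : ∑ i ∈ range j, c i = Real.cos (p j) - Real.cos (p 0) := by
        rw [hcdef]
        exact Finset.sum_range_sub (fun i => Real.cos (p i)) j
      rw [htel]
      have : p 0 = A := by rw [hpdef]; simp
      rw [this]; ring
    -- distance from t to p j
    have htpj : |t - p j| ≤ h / 2 := by
      have heq : t - p j = (r - j - 1/2) * h := by
        simp only [hpdef, hrdef]; field_simp; ring
      rw [heq, abs_mul, abs_of_pos hh]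
      have h1 : |r - (j:ℝ) - 1/2| ≤ 1/2 := abs_le.2 ⟨by linarith, by linarith⟩
      have h2 := mul_le_mul_of_nonneg_right h1 hh.le
      linarith
    have hcos : |Real.cos t - Real.cos (p j)| ≤ ε' :=
      le_trans (le_trans (ua_cos_lip _ _) htpj) (by linarith)
    -- base term
    have hbase : |σ (k * (t - A + 1)) - 1| ≤ η := by
      apply hKup
      have h1 : (1:ℝ) ≤ t - A + 1 := by linarith
      calc K ≤ k := hkK
        _ = k * 1 := (mul_one k).symm
        _ ≤ k * (t - A + 1) := mul_le_mul_of_nonneg_left h1 hk0.le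
    -- per-term bounds
    have hterm : ∀ i ∈ range m,
        |c i * (if q i ≤ t then 1 else 0) - c i * σ (k * (t - q i))|
        ≤ if |t - q i| < h/2 then h * (1 + M) else h * η := by
      intro i _
      rw [← mul_sub, abs_mul]
      by_cases hnear : |t - q i| < h/2
      · rw [if_pos hnear]
        refine mul_le_mul (hcbound i) ?_ (abs_nonneg _) hh.le
        calc |(if q i ≤ t then (1:ℝ) else 0) - σ (k * (t - q i))|
            ≤ |(if q i ≤ t then (1:ℝ) else 0)| + |σ (k * (t - q i))| := abs_sub _ _
          _ ≤ 1 + M := add_le_add (by split <;> simp) (hM _)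
      · rw [if_neg hnear]
        have habs : h/2 ≤ |t - q i| := not_lt.1 hnear
        rcases le_or_gt (q i) t with hq | hq
        · have hd : h/2 ≤ t - q i := by
            rwa [abs_of_nonneg (by linarith)] at habs
          have hKle : K ≤ k * (t - q i) :=
            le_trans hkh (mul_le_mul_of_nonneg_left hd hk0.le)
          rw [if_pos hq]
          refine mul_le_mul (hcbound i) ?_ (abs_nonneg _) hh.le
          rw [abs_sub_comm]
          exact hKup _ hKle
        · have hd : t - q i ≤ -(h/2) := by
            rw [abs_of_neg (by linarith)] at habs
            linarith
          have hKle : k * (t - q i) ≤ -K := by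
            have h5 := mul_le_mul_of_nonneg_left hd hk0.le
            rw [mul_neg] at h5
            linarith
          rw [if_neg (not_le.2 hq), zero_sub, abs_neg]
          exact mul_le_mul (hcbound i) (hKdown _ hKle) (abs_nonneg _) hh.le
    -- near-set cardinality
    have hcard : ((range m).filter (fun i => |t - q i| < h/2)).card ≤ 1 := by
      rw [Finset.card_le_one]
      intro i hi i' hi'
      simp only [Finset.mem_filter] at hi hi'
      by_contra hne
      have h1 : |q i - q i'| < h := by
        have e1 : q i - q i' = (q i - t) - (q i' - t) := by ring
        calc |q i - q i'| = |(q i - t) - (q i' - t)| := by rw [← e1]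
          _ ≤ |q i - t| + |q i' - t| := abs_sub _ _
          _ < h := by
              rw [abs_sub_comm (q i) t, abs_sub_comm (q i') t]
              linarith [hi.2, hi'.2]
      have h2 : h ≤ |q i - q i'| := by
        have e2 : q i - q i' = ((i:ℝ) - i') * h := by
          rw [hqdef]; simp only; ring
        rw [e2, abs_mul, abs_of_pos hh]
        have hcast : (1:ℝ) ≤ |(i:ℝ) - (i':ℝ)| := by
          rcases Nat.lt_or_ge i i' with hlt | hge
          · have hle : (i:ℝ) + 1 ≤ i' := by exact_mod_cast hlt
            rw [abs_sub_comm, abs_of_nonneg (by linarith)]; linarith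
          · have hlt : i' < i := lt_of_le_of_ne hge (fun e => hne e.symm)
            have hle : (i':ℝ) + 1 ≤ i := by exact_mod_cast hlt
            rw [abs_of_nonneg (by linarith)]; linarith
        have h3 := mul_le_mul_of_nonneg_right hcast hh.le
        rw [one_mul] at h3
        exact h3
      linarith
    -- assemble the sum bound
    have hsum : ∑ i ∈ range m,
        |c i * (if q i ≤ t then 1 else 0) - c i * σ (k * (t - q i))|
        ≤ h * (1 + M) + (B - A) * η := by
      have hnn1 : (0:ℝ) ≤ h * (1 + M) := mul_nonneg hh.le (by linarith)
      have hnn2 : (0:ℝ) ≤ h * η := by positivity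
      calc ∑ i ∈ range m, |c i * (if q i ≤ t then 1 else 0) - c i * σ (k * (t - q i))|
          ≤ ∑ i ∈ range m, (if |t - q i| < h/2 then h * (1 + M) else h * η) :=
            Finset.sum_le_sum hterm
        _ = ∑ _i ∈ (range m).filter (fun i => |t - q i| < h/2), h * (1 + M)
            + ∑ _i ∈ (range m).filter (fun i => ¬ |t - q i| < h/2), h * η :=
            Finset.sum_ite _ _
        _ ≤ 1 * (h * (1 + M)) + m * (h * η) := by
            apply add_le_add
            · rw [Finset.sum_const, nsmul_eq_mul]
              exact mul_le_mul_of_nonneg_right (by exact_mod_cast hcard) hnn1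
            · rw [Finset.sum_const, nsmul_eq_mul]
              refine mul_le_mul_of_nonneg_right ?_ hnn2
              have hcf := Finset.card_filter_le (range m) (fun i => ¬ |t - q i| < h/2)
              rw [Finset.card_range] at hcf
              exact_mod_cast hcf
        _ = h * (1 + M) + (B - A) * η := by
            rw [one_mul, ← mul_assoc, hmh]
    -- step function vs approximant
    have hFS : |Real.cos (p j) - F t| ≤ |Real.cos A| * η + (h * (1 + M) + (B - A) * η) := by
      rw [← hS, hFdef]
      simp only
      have e3 : Real.cos A + (∑ i ∈ range m, c i * (if q i ≤ t then 1 else 0))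
          - (Real.cos A * σ (k * (t - A + 1)) + ∑ i ∈ range m, c i * σ (k * (t - q i)))
          = Real.cos A * (1 - σ (k * (t - A + 1)))
            + ∑ i ∈ range m, (c i * (if q i ≤ t then 1 else 0) - c i * σ (k * (t - q i))) := by
        rw [Finset.sum_sub_distrib]; ring
      rw [e3]
      calc |Real.cos A * (1 - σ (k * (t - A + 1)))
            + ∑ i ∈ range m, (c i * (if q i ≤ t then 1 else 0) - c i * σ (k * (t - q i)))|
          ≤ |Real.cos A * (1 - σ (k * (t - A + 1)))|
            + |∑ i ∈ range m, (c i * (if q i ≤ t then 1 else 0) - c i * σ (k * (t - q i)))| :=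
            abs_add_le _ _
        _ ≤ |Real.cos A| * η + (h * (1 + M) + (B - A) * η) := by
            apply add_le_add
            · rw [abs_mul]
              refine mul_le_mul_of_nonneg_left ?_ (abs_nonneg _)
              rw [abs_sub_comm]
              exact hbase
            · exact le_trans (Finset.abs_sum_le_sum_abs _ _) hsum
    -- final numeric assembly
    have hεp1 : ε' * (M + 2) = ε / 3 := by
      rw [hε'def]; field_simp
    have hbnd : |Real.cos A| * η + (h * (1 + M) + (B - A) * η) ≤ ε / 3 + ε' * (1 + M) := by
      have hb1 : |Real.cos A| * η + (B - A) * η ≤ CC * η := by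
        have e1 : (|Real.cos A| + (B - A)) * η ≤ CC * η :=
          mul_le_mul_of_nonneg_right (by rw [hCCdef]; linarith) hη.le
        have e2 : (|Real.cos A| + (B - A)) * η = |Real.cos A| * η + (B - A) * η := by ring
        linarith
      have hb2 : h * (1 + M) ≤ ε' * (1 + M) :=
        mul_le_mul_of_nonneg_right (by linarith) (by linarith)
      rw [hCCη] at hb1
      linarith
    calc |Real.cos t - F t|
        = |(Real.cos t - Real.cos (p j)) + (Real.cos (p j) - F t)| := by ring_nf
      _ ≤ |Real.cos t - Real.cos (p j)| + |Real.cos (p j) - F t| := abs_add_le _ _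
      _ ≤ ε' + (|Real.cos A| * η + (h * (1 + M) + (B - A) * η)) := add_le_add hcos hFS
      _ ≤ ε' + (ε / 3 + ε' * (1 + M)) := by linarith
      _ = ε / 3 + ε' * (M + 2) := by ring
      _ = ε / 3 + ε / 3 := by rw [hεp1]
      _ < ε := by linarith
  -- package into the required form
  refine ⟨m + 1, Fin.cons (Real.cos A) (fun i : Fin m => c i),
    fun _ => k, Fin.cons (k * (1 - A)) (fun i : Fin m => -(k * q i)), ?_⟩
  intro t ht
  have hrw : ∑ l : Fin (m+1),
      (Fin.cons (Real.cos A) (fun i : Fin m => c i) : Fin (m+1) → ℝ) l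
        * σ ((fun _ => k) l * t + (Fin.cons (k * (1 - A)) (fun i : Fin m => -(k * q i)) : Fin (m+1) → ℝ) l)
      = F t := by
    rw [Fin.sum_univ_succ]
    simp only [Fin.cons_zero, Fin.cons_succ]
    rw [hFdef]
    simp only
    congr 1
    · congr 2; ring
    · rw [← Fin.sum_univ_eq_sum_range (fun i => c i * σ (k * (t - q i))) m]
      apply Finset.sum_congr rfl
      intro i _
      congr 2
      ring
  rw [hrw]
  exact key t ht
/-- Functions exactly representable as finite sigmoid ridge sums. -/
private def UARepr (n : ℕ) (σ : ℝ → ℝ) (F : (Fin n → ℝ) → ℝ) : Prop :=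
  ∃ (N : ℕ) (v b : Fin N → ℝ) (w : Fin N → Fin n → ℝ),
    ∀ x, F x = ∑ i, v i * σ (∑ j, w i j * x j + b i)

private lemma uarepr_zero (n : ℕ) (σ : ℝ → ℝ) : UARepr n σ 0 := by
  exact ⟨0, Fin.elim0, Fin.elim0, Fin.elim0, fun x => by simp⟩

private lemma uarepr_add {n : ℕ} {σ : ℝ → ℝ} {F G : (Fin n → ℝ) → ℝ}
    (hF : UARepr n σ F) (hG : UARepr n σ G) : UARepr n σ (F + G) := by
  obtain ⟨N1, v1, b1, w1, h1⟩ := hF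
  obtain ⟨N2, v2, b2, w2, h2⟩ := hG
  refine ⟨N1 + N2, Fin.append v1 v2, Fin.append b1 b2, Fin.append w1 w2, fun x => ?_⟩
  rw [Fin.sum_univ_add]
  simp only [Fin.append_left, Fin.append_right, Pi.add_apply]
  rw [h1 x, h2 x]

private lemma uarepr_smul {n : ℕ} {σ : ℝ → ℝ} {F : (Fin n → ℝ) → ℝ} (c : ℝ)
    (hF : UARepr n σ F) : UARepr n σ (fun x => c * F x) := by
  obtain ⟨N, v, b, w, h1⟩ := hF
  refine ⟨N, fun i => c * v i, b, w, fun x => ?_⟩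
  show c * F x = _
  rw [h1 x, Finset.mul_sum]
  exact Finset.sum_congr rfl (fun i _ => by ring)

/-- Approximating a single cosine ridge function by a sigmoid ridge sum on the cube. -/
private lemma ua_gen_approx (n : ℕ) (σ : ℝ → ℝ) (hσc : Continuous σ)
    (hσ1 : Filter.Tendsto σ Filter.atTop (nhds 1))
    (hσ0 : Filter.Tendsto σ Filter.atBot (nhds 0))
    (w0 : Fin n → ℝ) (b0 : ℝ) (δ : ℝ) (hδ : 0 < δ) :
    ∃ G : (Fin n → ℝ) → ℝ, UARepr n σ G ∧
      ∀ x ∈ Set.Icc (0 : Fin n → ℝ) 1,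
        |Real.cos (∑ j, w0 j * x j + b0) - G x| ≤ δ := by
  set R : ℝ := (∑ j, |w0 j|) + |b0| + 1 with hRdef
  have hR0 : 0 < R := by positivity
  obtain ⟨N, v, a, b, hab⟩ := ua_cos_approx σ hσc hσ1 hσ0 (-R) R (by linarith) δ hδ
  refine ⟨fun x => ∑ l, v l * σ (∑ j, (a l * w0 j) * x j + (a l * b0 + b l)),
    ⟨N, v, fun l => a l * b0 + b l, fun l j => a l * w0 j, fun x => rfl⟩, ?_⟩
  intro x hx
  rw [Set.mem_Icc] at hx
  have hx01 : ∀ j, |x j| ≤ 1 := by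
    intro j
    have h0 : (0:ℝ) ≤ x j := by simpa using hx.1 j
    have h1 : x j ≤ 1 := by simpa using hx.2 j
    rw [abs_le]
    exact ⟨by linarith, h1⟩
  have hmem : (∑ j, w0 j * x j + b0) ∈ Set.Icc (-R) R := by
    have h1 : |∑ j, w0 j * x j + b0| ≤ R := by
      calc |∑ j, w0 j * x j + b0| ≤ |∑ j, w0 j * x j| + |b0| := abs_add_le _ _
        _ ≤ (∑ j, |w0 j * x j|) + |b0| :=
            add_le_add_left (Finset.abs_sum_le_sum_abs _ _) _
        _ ≤ (∑ j, |w0 j|) + |b0| := by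
            apply add_le_add_left
            apply Finset.sum_le_sum
            intro j _
            rw [abs_mul]
            calc |w0 j| * |x j| ≤ |w0 j| * 1 :=
                  mul_le_mul_of_nonneg_left (hx01 j) (abs_nonneg _)
              _ = |w0 j| := mul_one _
        _ ≤ R := by rw [hRdef]; linarith
    rw [abs_le] at h1
    exact ⟨h1.1, h1.2⟩
  have hlt := hab _ hmem
  have hsame : (∑ l, v l * σ (∑ j, (a l * w0 j) * x j + (a l * b0 + b l)))
      = ∑ l, v l * σ (a l * (∑ j, w0 j * x j + b0) + b l) := by
    apply Finset.sum_congr rfl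
    intro l _
    congr 2
    rw [mul_add, Finset.mul_sum]
    have e : ∑ j, a l * w0 j * x j = ∑ j, a l * (w0 j * x j) :=
      Finset.sum_congr rfl (fun j _ => by ring)
    rw [e]; ring
  show |Real.cos (∑ j, w0 j * x j + b0)
      - ∑ l, v l * σ (∑ j, (a l * w0 j) * x j + (a l * b0 + b l))| ≤ δ
  rw [hsame]
  exact le_of_lt hlt
open Pointwise in
private noncomputable def uaGen (n : ℕ) (w : Fin n → ℝ) (b : ℝ) :
    C((Set.Icc (0 : Fin n → ℝ) 1), ℝ) :=
  ⟨fun x => Real.cos (∑ j, w j * (x : Fin n → ℝ) j + b),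
    Real.continuous_cos.comp ((continuous_finset_sum _ fun j _ =>
      continuous_const.mul ((continuous_apply j).comp continuous_subtype_val)).add
      continuous_const)⟩

private def uaS (n : ℕ) : Set C((Set.Icc (0 : Fin n → ℝ) 1), ℝ) :=
  {g | ∃ w b, g = uaGen n w b}

private lemma uaGen_mul (n : ℕ) (w1 w2 : Fin n → ℝ) (b1 b2 : ℝ) :
    uaGen n w1 b1 * uaGen n w2 b2 =
      (1/2 : ℝ) • uaGen n (w1 + w2) (b1 + b2) + (1/2 : ℝ) • uaGen n (w1 - w2) (b1 - b2) := by
  ext x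
  simp only [ContinuousMap.mul_apply, ContinuousMap.add_apply, ContinuousMap.smul_apply,
    smul_eq_mul, uaGen, ContinuousMap.coe_mk]
  have hadd : ∑ j, (w1 + w2) j * (x : Fin n → ℝ) j
      = (∑ j, w1 j * (x : Fin n → ℝ) j) + ∑ j, w2 j * (x : Fin n → ℝ) j := by
    rw [← Finset.sum_add_distrib]
    exact Finset.sum_congr rfl (fun j _ => by simp [Pi.add_apply]; ring)
  have hsub : ∑ j, (w1 - w2) j * (x : Fin n → ℝ) j
      = (∑ j, w1 j * (x : Fin n → ℝ) j) - ∑ j, w2 j * (x : Fin n → ℝ) j := by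
    rw [← Finset.sum_sub_distrib]
    exact Finset.sum_congr rfl (fun j _ => by simp [Pi.sub_apply]; ring)
  have key : ∀ u v' : ℝ, Real.cos u * Real.cos v'
      = 1/2 * Real.cos (u + v') + 1/2 * Real.cos (u - v') := by
    intro u v'
    rw [Real.cos_add, Real.cos_sub]
    ring
  rw [hadd, hsub]
  have e1 : (∑ j, w1 j * (x : Fin n → ℝ) j) + (∑ j, w2 j * (x : Fin n → ℝ) j) + (b1 + b2)
      = ((∑ j, w1 j * (x : Fin n → ℝ) j) + b1) + ((∑ j, w2 j * (x : Fin n → ℝ) j) + b2) := by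
    ring
  have e2 : (∑ j, w1 j * (x : Fin n → ℝ) j) - (∑ j, w2 j * (x : Fin n → ℝ) j) + (b1 - b2)
      = ((∑ j, w1 j * (x : Fin n → ℝ) j) + b1) - ((∑ j, w2 j * (x : Fin n → ℝ) j) + b2) := by
    ring
  rw [e1, e2, key]

private lemma uaS_one (n : ℕ) : (1 : C((Set.Icc (0 : Fin n → ℝ) 1), ℝ)) ∈ uaS n := by
  refine ⟨0, 0, ?_⟩
  ext x
  simp [uaGen]

open Pointwise in
private lemma uaS_mul_mem (n : ℕ) (fg : C((Set.Icc (0 : Fin n → ℝ) 1), ℝ))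
    (hfg : fg ∈ uaS n * uaS n) : fg ∈ Submodule.span ℝ (uaS n) := by
  rw [Set.mem_mul] at hfg
  obtain ⟨f, hf, g, hg, rfl⟩ := hfg
  obtain ⟨w1, b1, rfl⟩ := hf
  obtain ⟨w2, b2, rfl⟩ := hg
  rw [uaGen_mul]
  exact Submodule.add_mem _
    (Submodule.smul_mem _ _ (Submodule.subset_span ⟨_, _, rfl⟩))
    (Submodule.smul_mem _ _ (Submodule.subset_span ⟨_, _, rfl⟩))

/-- Universal approximation theorem (Cybenko 1989): sums of sigmoidal ridge
functions are dense in `C([0,1]^n, ℝ)` for the sup norm. -/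
theorem universal_approximation (n : ℕ) (σ : ℝ → ℝ)
    (hσc : Continuous σ)
    (hσ1 : Filter.Tendsto σ Filter.atTop (nhds 1))
    (hσ0 : Filter.Tendsto σ Filter.atBot (nhds 0))
    (f : (Fin n → ℝ) → ℝ) (hf : ContinuousOn f (Set.Icc 0 1))
    (ε : ℝ) (hε : 0 < ε) :
    ∃ (N : ℕ) (v b : Fin N → ℝ) (w : Fin N → Fin n → ℝ),
      ∀ x ∈ Set.Icc (0 : Fin n → ℝ) 1,
        |f x - ∑ i, v i * σ (∑ j, w i j * x j + b i)| < ε := by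
  classical
  -- the subalgebra of cosine ridge functions
  have hmul : ∀ u v : C((Set.Icc (0 : Fin n → ℝ) 1), ℝ),
      u ∈ Submodule.span ℝ (uaS n) → v ∈ Submodule.span ℝ (uaS n) →
      u * v ∈ Submodule.span ℝ (uaS n) := by
    intro u v hu hv
    have h1 := Submodule.mul_mem_mul hu hv
    rw [Submodule.span_mul_span] at h1
    exact Submodule.span_le.2 (uaS_mul_mem n) h1
  set Aalg : Subalgebra ℝ C((Set.Icc (0 : Fin n → ℝ) 1), ℝ) :=
    (Submodule.span ℝ (uaS n)).toSubalgebra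
      (Submodule.subset_span (uaS_one n)) hmul with hAalg
  -- it separates points
  have hsep : Aalg.SeparatesPoints := by
    intro x y hxy
    obtain ⟨j, hj⟩ := Function.ne_iff.1 (fun hxy' => hxy (Subtype.ext hxy'))
    refine ⟨⇑(uaGen n (fun k => if k = j then Real.pi else 0) 0),
      ⟨uaGen n (fun k => if k = j then Real.pi else 0) 0,
        Submodule.subset_span ⟨_, _, rfl⟩, rfl⟩, ?_⟩
    have happ : ∀ z : (Set.Icc (0 : Fin n → ℝ) 1),
        uaGen n (fun k => if k = j then Real.pi else 0) 0 z
          = Real.cos (Real.pi * (z : Fin n → ℝ) j) := by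
      intro z
      simp only [uaGen, ContinuousMap.coe_mk, add_zero]
      congr 1
      rw [Finset.sum_eq_single j]
      · simp
      · intro k _ hk; simp [hk]
      · intro hj'; exact absurd (Finset.mem_univ j) hj'
    rw [happ x, happ y]
    intro heq
    have hx01 : ∀ z : (Set.Icc (0 : Fin n → ℝ) 1),
        Real.pi * (z : Fin n → ℝ) j ∈ Set.Icc 0 Real.pi := by
      intro z
      obtain ⟨hz0, hz1⟩ := z.2
      have h0 : (0:ℝ) ≤ (z : Fin n → ℝ) j := by simpa using hz0 j
      have h1 : (z : Fin n → ℝ) j ≤ 1 := by simpa using hz1 j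
      constructor
      · positivity
      · calc Real.pi * (z : Fin n → ℝ) j ≤ Real.pi * 1 :=
            mul_le_mul_of_nonneg_left h1 Real.pi_pos.le
          _ = Real.pi := mul_one _
    have := Real.injOn_cos (hx01 x) (hx01 y) heq
    exact hj (mul_left_cancel₀ Real.pi_ne_zero this)
  -- Stone–Weierstrass
  have hfc : Continuous fun x : (Set.Icc (0 : Fin n → ℝ) 1) => f x := hf.restrict
  obtain ⟨g, hg⟩ := ContinuousMap.exists_mem_subalgebra_near_continuous_of_separatesPoints
    Aalg hsep _ hfc (ε/2) (by linarith)
  have hgmem : (g : C((Set.Icc (0 : Fin n → ℝ) 1), ℝ)) ∈ Submodule.span ℝ (uaS n) := g.2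
  obtain ⟨N0, co, gg, hgg⟩ := Submodule.mem_span_set'.1 hgmem
  choose w0 b0 hwb using fun i => (gg i).2
  -- approximate each cosine ridge generator by sigmoid ridge sums
  have hS0 : (0:ℝ) ≤ ∑ i, |co i| := Finset.sum_nonneg (fun i _ => abs_nonneg _)
  have hδ : 0 < ε / (2 * ((∑ i, |co i|) + 1)) := by positivity
  choose G hGrepr hGerr using fun i =>
    ua_gen_approx n σ hσc hσ1 hσ0 (w0 i) (b0 i) _ hδ
  -- the final approximant is representable
  have hFrepr : UARepr n σ (fun x => ∑ i, co i * G i x) := by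
    have hgen : ∀ s : Finset (Fin N0), UARepr n σ (fun x => ∑ i ∈ s, co i * G i x) := by
      intro s
      induction s using Finset.induction with
      | empty => exact uarepr_zero n σ
      | insert _ _ hns ih =>
        rename_i a s'
        have : (fun x => ∑ i ∈ insert a s', co i * G i x)
            = (fun x => co a * G a x) + (fun x => ∑ i ∈ s', co i * G i x) := by
          funext x
          simp [Finset.sum_insert hns]
        rw [this]
        exact uarepr_add (uarepr_smul _ (hGrepr a)) ih
    exact hgen Finset.univ
  obtain ⟨N, v, b, w, hNrep⟩ := hFrepr
  refine ⟨N, v, b, w, fun x hx => ?_⟩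
  rw [← hNrep x]
  -- evaluate g at x
  have hgx : (g : C((Set.Icc (0 : Fin n → ℝ) 1), ℝ)) ⟨x, hx⟩
      = ∑ i, co i * Real.cos (∑ j, w0 i j * x j + b0 i) := by
    rw [← hgg]
    simp only [ContinuousMap.coe_sum, Finset.sum_apply, ContinuousMap.coe_smul,
      Pi.smul_apply, smul_eq_mul]
    apply Finset.sum_congr rfl
    intro i _
    rw [hwb i]
    rfl
  have h1 := hg ⟨x, hx⟩
  rw [Real.norm_eq_abs, hgx] at h1
  have h2 : |(∑ i, co i * Real.cos (∑ j, w0 i j * x j + b0 i))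
      - ∑ i, co i * G i x| ≤ (∑ i, |co i|) * (ε / (2 * ((∑ i, |co i|) + 1))) := by
    rw [← Finset.sum_sub_distrib]
    calc |∑ i, (co i * Real.cos (∑ j, w0 i j * x j + b0 i) - co i * G i x)|
        ≤ ∑ i, |co i * Real.cos (∑ j, w0 i j * x j + b0 i) - co i * G i x| :=
          Finset.abs_sum_le_sum_abs _ _
      _ ≤ ∑ i, |co i| * (ε / (2 * ((∑ i', |co i'|) + 1))) := by
          apply Finset.sum_le_sum
          intro i _
          rw [← mul_sub, abs_mul]
          exact mul_le_mul_of_nonneg_left (hGerr i x hx) (abs_nonneg _)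
      _ = (∑ i, |co i|) * (ε / (2 * ((∑ i, |co i|) + 1))) := by
          rw [Finset.sum_mul]
  have h3 : (∑ i, |co i|) * (ε / (2 * ((∑ i, |co i|) + 1))) ≤ ε/2 := by
    have hC0 : (0:ℝ) < (∑ i, |co i|) + 1 := by linarith
    calc (∑ i, |co i|) * (ε / (2 * ((∑ i, |co i|) + 1)))
        ≤ ((∑ i, |co i|) + 1) * (ε / (2 * ((∑ i, |co i|) + 1))) :=
          mul_le_mul_of_nonneg_right (by linarith) (by positivity)
      _ = ε/2 := by field_simp
  calc |f x - ∑ i, co i * G i x|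
      = |(f x - ∑ i, co i * Real.cos (∑ j, w0 i j * x j + b0 i))
        + ((∑ i, co i * Real.cos (∑ j, w0 i j * x j + b0 i)) - ∑ i, co i * G i x)| := by
        ring_nf
    _ ≤ |f x - ∑ i, co i * Real.cos (∑ j, w0 i j * x j + b0 i)|
        + |(∑ i, co i * Real.cos (∑ j, w0 i j * x j + b0 i)) - ∑ i, co i * G i x| :=
        abs_add_le _ _
    _ < ε/2 + ε/2 := by
        apply add_lt_add_of_lt_of_le
        · rw [abs_sub_comm]; exact h1
        · exact le_trans h2 h3
    _ = ε := by ring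
end
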